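/- arXiv:1112.0490 — 4 statements merged into one kernel-verified Lean document; each statement's English description precedes it below -/
import Mathlib

section
/- Let δ ∈ (0,1), λ > 0, k > 0, let v : ℝ³ → ℝ be measurable with γ := max( ∫_{ℝ³} |x|² (1+|x|^δ) |v(x)|² dx , ∫_{ℝ³} (1+|x|^δ) |v(x)|² dx ) < ∞, and let ψ ∈ L²(ℝ³, ℂ) satisfy ∫_{ℝ³} (1+|x|^δ)^{-1} |ψ(x)|² dx = 1, v·ψ ∈ L¹(ℝ³), and the integral equation ψ(x) = (λ/(4π)) ∫_{ℝ³} e^{-k|x-x'|}/|x-x'| · v(x') ψ(x') dx' for almost every x. Define f(x) := (λ/(4π)) (e^{-k|x|}/|x|) ∫_{ℝ³} v(x') ψ(x') dx'. Then ∫_{ℝ³} |ψ(x) - f(x)|² dx ≤ λ² γ / (2π). -/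
open MeasureTheory Real Set
open scoped ENNReal

noncomputable section

namespace Stmt5Aux

abbrev E3 := EuclideanSpace ℝ (Fin 3)




lemma integral_exp_neg_mul_Ioi {κ : ℝ} (hκ : 0 < κ) (b : ℝ) :
    ∫ u in Ioi b, Real.exp (-κ * u) = Real.exp (-κ * b) / κ := by
  have h : ∀ x ∈ Ioi b, HasDerivAt (fun u => -Real.exp (-κ * u) / κ) (Real.exp (-κ * x)) x := by
    intro x _
    have h1 : HasDerivAt (fun u : ℝ => -κ * u) (-κ) x := by
      simpa using (hasDerivAt_id x).const_mul (-κ)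
    have h2 := (h1.exp).neg.div_const κ
    refine h2.congr_deriv ?_
    field_simp
  have hcont : ContinuousWithinAt (fun u => -Real.exp (-κ * u) / κ) (Ici b) b := by
    exact (((Real.continuous_exp.comp (continuous_const.mul continuous_id)).neg).div_const κ).continuousWithinAt
  have hint : IntegrableOn (fun u => Real.exp (-κ * u)) (Ioi b) := exp_neg_integrableOn_Ioi b hκ
  have htend : Filter.Tendsto (fun u => -Real.exp (-κ * u) / κ) Filter.atTop (nhds 0) := by
    have : Filter.Tendsto (fun u : ℝ => Real.exp (-κ * u)) Filter.atTop (nhds 0) := by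
      apply Real.tendsto_exp_atBot.comp
      exact Filter.tendsto_id.const_mul_atTop_of_neg (neg_neg_iff_pos.2 hκ)
    have := (this.neg).div_const κ
    simpa using this
  have := integral_Ioi_of_hasDerivAt_of_tendsto hcont h hint htend
  rw [this]
  field_simp
  ring

lemma lintegral_exp_neg_mul_Ioi {κ : ℝ} (hκ : 0 < κ) (b : ℝ) :
    ∫⁻ u in Ioi b, ENNReal.ofReal (Real.exp (-κ * u)) = ENNReal.ofReal (Real.exp (-κ * b) / κ) := by
  rw [← ofReal_integral_eq_lintegral_ofReal (exp_neg_integrableOn_Ioi b hκ)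
    (Filter.Eventually.of_forall fun x => (Real.exp_pos _).le), integral_exp_neg_mul_Ioi hκ b]

lemma lintegral_comp_polarCoord_symm (g : ℝ × ℝ → ℝ≥0∞) :
    ∫⁻ p, g p = ∫⁻ q in polarCoord.target, ENNReal.ofReal q.1 * g (polarCoord.symm q) := by
  set B : ℝ × ℝ → ℝ × ℝ →L[ℝ] ℝ × ℝ := fun p =>
    LinearMap.toContinuousLinearMap (Matrix.toLin (Module.Basis.finTwoProd ℝ) (Module.Basis.finTwoProd ℝ)
      !![Real.cos p.2, -p.1 * Real.sin p.2; Real.sin p.2, p.1 * Real.cos p.2]) with hB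
  have A : ∀ p ∈ polarCoord.target, HasFDerivWithinAt (⇑polarCoord.symm) (B p) polarCoord.target p :=
    fun p _ => (hasFDerivAt_polarCoord_symm p).hasFDerivWithinAt
  have B_det : ∀ p, (B p).det = p.1 := by
    intro p
    conv_rhs => rw [← one_mul p.1, ← cos_sq_add_sin_sq p.2]
    simp only [hB, neg_mul, LinearMap.det_toContinuousLinearMap, LinearMap.det_toLin,
      Matrix.det_fin_two_of, sub_neg_eq_add]
    ring
  calc ∫⁻ p, g p = ∫⁻ p in polarCoord.source, g p := by
        rw [← setLIntegral_univ]; exact (setLIntegral_congr polarCoord_source_ae_eq_univ).symm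
    _ = ∫⁻ p in ⇑polarCoord.symm '' polarCoord.target, g p := by
        rw [polarCoord.symm_image_target_eq_source]
    _ = ∫⁻ q in polarCoord.target, ENNReal.ofReal |(B q).det| * g (polarCoord.symm q) :=
        lintegral_image_eq_lintegral_abs_det_fderiv_mul volume
          polarCoord.open_target.measurableSet A polarCoord.symm.injOn g
    _ = _ := by
        refine setLIntegral_congr_fun polarCoord.open_target.measurableSet ?_
        exact fun q hq => by rw [B_det, abs_of_pos hq.1]

lemma lintegral_radial (g : ℝ → ℝ≥0∞) (hg : Measurable g) :
    ∫⁻ p : ℝ × ℝ, g (p.1 ^ 2 + p.2 ^ 2) =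
      ENNReal.ofReal (2 * π) * ∫⁻ ρ in Ioi (0:ℝ), ENNReal.ofReal ρ * g (ρ ^ 2) := by
  rw [lintegral_comp_polarCoord_symm (fun p => g (p.1 ^ 2 + p.2 ^ 2))]
  have h1 : ∀ q : ℝ × ℝ, ((polarCoord.symm q).1 ^ 2 + (polarCoord.symm q).2 ^ 2) = q.1 ^ 2 := by
    intro q
    rw [polarCoord_symm_apply]
    dsimp
    rw [mul_pow, mul_pow, ← mul_add, cos_sq_add_sin_sq, mul_one]
  have htarget : polarCoord.target = Ioi (0:ℝ) ×ˢ Ioo (-π) π := rfl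
  calc ∫⁻ q in polarCoord.target, ENNReal.ofReal q.1 * g ((polarCoord.symm q).1 ^ 2 + (polarCoord.symm q).2 ^ 2)
      = ∫⁻ q in Ioi (0:ℝ) ×ˢ Ioo (-π) π, ENNReal.ofReal q.1 * g (q.1 ^ 2) := by
        rw [htarget]
        refine lintegral_congr fun q => by rw [h1]
    _ = ∫⁻ ρ in Ioi (0:ℝ), ∫⁻ _ in Ioo (-π) π, ENNReal.ofReal ρ * g (ρ ^ 2) := by
        rw [MeasureTheory.Measure.volume_eq_prod, ← Measure.prod_restrict]
        exact lintegral_prod _ ((ENNReal.measurable_ofReal.comp measurable_fst).mul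
          (hg.comp ((measurable_fst.pow_const 2)))).aemeasurable
    _ = ∫⁻ ρ in Ioi (0:ℝ), (ENNReal.ofReal ρ * g (ρ ^ 2)) * ENNReal.ofReal (2 * π) := by
        refine lintegral_congr fun ρ => ?_
        rw [setLIntegral_const, Real.volume_Ioo]
        congr 1
        ring_nf
    _ = _ := by
        rw [lintegral_mul_const' _ _ ENNReal.ofReal_ne_top, mul_comm]






lemma lintegral_image_eq_lintegral_abs_deriv_mul' {s : Set ℝ} {f f' : ℝ → ℝ}
    (hs : MeasurableSet s) (hf' : ∀ x ∈ s, HasDerivWithinAt f (f' x) s x)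
    (hf : InjOn f s) (g : ℝ → ℝ≥0∞) :
    ∫⁻ x in f '' s, g x = ∫⁻ x in s, ENNReal.ofReal |f' x| * g (f x) := by
  simpa only [ContinuousLinearMap.det_toSpanSingleton] using
    MeasureTheory.lintegral_image_eq_lintegral_abs_det_fderiv_mul volume hs
      (fun x hx => (hf' x hx).hasFDerivWithinAt) hf g

lemma sqrt_comp_hasDerivAt (c ρ : ℝ) (h1 : 0 < c + ρ ^ 2) :
    HasDerivAt (fun t : ℝ => Real.sqrt (c + t ^ 2)) (ρ / Real.sqrt (c + ρ ^ 2)) ρ := by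
  have h2 : HasDerivAt (fun t : ℝ => c + t ^ 2) (2 * ρ) ρ := by
    simpa using (hasDerivAt_pow 2 ρ).const_add c
  have h3 := (Real.hasDerivAt_sqrt h1.ne').comp ρ h2
  refine h3.congr_deriv ?_
  have h4 : Real.sqrt (c + ρ ^ 2) ≠ 0 := (Real.sqrt_pos.2 h1).ne'
  field_simp

lemma cov_gen {c d : ℝ} (hc : 0 ≤ c) (hd : 0 ≤ d) (g : ℝ → ℝ≥0∞) :
    ∫⁻ u in Ioi (Real.sqrt c + Real.sqrt d), g u =
      ∫⁻ ρ in Ioi (0:ℝ),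
        ENNReal.ofReal (ρ / Real.sqrt (c + ρ ^ 2) + ρ / Real.sqrt (d + ρ ^ 2)) *
          g (Real.sqrt (c + ρ ^ 2) + Real.sqrt (d + ρ ^ 2)) := by
  set φ : ℝ → ℝ := fun ρ => Real.sqrt (c + ρ ^ 2) + Real.sqrt (d + ρ ^ 2) with hφ
  set ψ : ℝ → ℝ := fun ρ => ρ / Real.sqrt (c + ρ ^ 2) + ρ / Real.sqrt (d + ρ ^ 2) with hψ
  have hmono : StrictMonoOn φ (Ioi (0:ℝ)) := by
    intro ρ1 h1 ρ2 h2 hlt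
    have e1 : Real.sqrt (c + ρ1 ^ 2) < Real.sqrt (c + ρ2 ^ 2) :=
      Real.sqrt_lt_sqrt (by positivity) (by nlinarith [mem_Ioi.1 h1])
    have e2 : Real.sqrt (d + ρ1 ^ 2) < Real.sqrt (d + ρ2 ^ 2) :=
      Real.sqrt_lt_sqrt (by positivity) (by nlinarith [mem_Ioi.1 h1])
    exact add_lt_add e1 e2
  have himg : φ '' Ioi 0 = Ioi (Real.sqrt c + Real.sqrt d) := by
    apply Subset.antisymm
    · rintro _ ⟨ρ, hρ, rfl⟩
      have hρ' : (0:ℝ) < ρ := hρ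
      have e1 : Real.sqrt c < Real.sqrt (c + ρ ^ 2) := Real.sqrt_lt_sqrt hc (by nlinarith)
      have e2 : Real.sqrt d < Real.sqrt (d + ρ ^ 2) := Real.sqrt_lt_sqrt hd (by nlinarith)
      exact mem_Ioi.2 (add_lt_add e1 e2)
    · intro u hu
      have hu' : Real.sqrt c + Real.sqrt d < u := mem_Ioi.1 hu
      have hcs : Real.sqrt c ^ 2 = c := Real.sq_sqrt hc
      have hds : Real.sqrt d ^ 2 = d := Real.sq_sqrt hd
      have hcn : 0 ≤ Real.sqrt c := Real.sqrt_nonneg c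
      have hdn : 0 ≤ Real.sqrt d := Real.sqrt_nonneg d
      have hu0 : 0 < u := by linarith [lt_of_le_of_lt (by positivity : (0:ℝ) ≤ Real.sqrt c + Real.sqrt d) hu']
      set r : ℝ := (u ^ 2 + (c - d)) / (2 * u) with hr
      set s : ℝ := (u ^ 2 - (c - d)) / (2 * u) with hs
      have hrm : r * (2 * u) = u ^ 2 + (c - d) := by
        rw [hr]; field_simp
      have hsm : s * (2 * u) = u ^ 2 - (c - d) := by
        rw [hs]; field_simp
      -- r > sqrt c
      have hdu : Real.sqrt d < u - Real.sqrt c := by linarith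
      have hcu : Real.sqrt c < u - Real.sqrt d := by linarith
      have hd2 : d < (u - Real.sqrt c) ^ 2 := by nlinarith
      have hc2 : c < (u - Real.sqrt d) ^ 2 := by nlinarith
      have hrc : Real.sqrt c < r := by nlinarith
      have hsd : Real.sqrt d < s := by nlinarith
      have hr0 : 0 < r := lt_of_le_of_lt hcn hrc
      have hs0 : 0 < s := lt_of_le_of_lt hdn hsd
      have hρsq : 0 < r ^ 2 - c := by nlinarith
      refine ⟨Real.sqrt (r ^ 2 - c), mem_Ioi.2 (Real.sqrt_pos.2 hρsq), ?_⟩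
      have hρ2 : Real.sqrt (r ^ 2 - c) ^ 2 = r ^ 2 - c := Real.sq_sqrt hρsq.le
      have hrs : r ^ 2 - s ^ 2 = c - d := by
        rw [hr, hs]
        field_simp
        ring
      have e1 : Real.sqrt (c + Real.sqrt (r ^ 2 - c) ^ 2) = r := by
        rw [hρ2, show c + (r ^ 2 - c) = r ^ 2 by ring, Real.sqrt_sq hr0.le]
      have e2 : Real.sqrt (d + Real.sqrt (r ^ 2 - c) ^ 2) = s := by
        rw [hρ2, show d + (r ^ 2 - c) = s ^ 2 by nlinarith, Real.sqrt_sq hs0.le]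
      show Real.sqrt (c + Real.sqrt (r ^ 2 - c) ^ 2) + Real.sqrt (d + Real.sqrt (r ^ 2 - c) ^ 2) = u
      rw [e1, e2, hr, hs]
      field_simp
      ring
  have hderiv : ∀ ρ ∈ Ioi (0:ℝ), HasDerivWithinAt φ (ψ ρ) (Ioi (0:ℝ)) ρ := by
    intro ρ hρ
    have hρ' : (0:ℝ) < ρ := hρ
    have d1 := sqrt_comp_hasDerivAt c ρ (by positivity)
    have d2 := sqrt_comp_hasDerivAt d ρ (by positivity)
    exact ((d1.add d2).hasDerivWithinAt)
  rw [← himg, lintegral_image_eq_lintegral_abs_deriv_mul' measurableSet_Ioi hderiv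
    (hmono.injOn) g]
  refine setLIntegral_congr_fun measurableSet_Ioi ?_
  refine fun ρ hρ => ?_
  have hρ' : (0:ℝ) < ρ := hρ
  have : 0 ≤ ψ ρ := by
    apply add_nonneg <;> positivity
  beta_reduce
  rw [abs_of_nonneg this]






lemma key_swap {k b : ℝ} (hk : 0 < k) (hb : 0 ≤ b) :
    ∫⁻ z : ℝ, ∫⁻ u in Ioi (|z| + |z - b|), ENNReal.ofReal (Real.exp (-k * u) / u) =
      ENNReal.ofReal (Real.exp (-k * b) / k) := by
  set W : ℝ → ℝ≥0∞ := fun u => ENNReal.ofReal (Real.exp (-k * u) / u) with hW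
  have hWm : Measurable W := by
    apply ENNReal.measurable_ofReal.comp
    exact ((Real.continuous_exp.comp (continuous_const.mul continuous_id)).measurable).div
      measurable_id
  -- as indicator
  have h1 : ∀ z : ℝ, (∫⁻ u in Ioi (|z| + |z - b|), W u) =
      ∫⁻ u : ℝ, (Ioi (|z| + |z - b|)).indicator W u := by
    intro z; rw [lintegral_indicator measurableSet_Ioi]
  have hT : MeasurableSet {p : ℝ × ℝ | |p.1| + |p.1 - b| < p.2} := by
    apply measurableSet_lt
    · exact ((continuous_fst.abs).add ((continuous_fst.sub continuous_const).abs)).measurable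
    · exact measurable_snd
  have huncurry : Measurable (Function.uncurry fun z u => (Ioi (|z| + |z - b|)).indicator W u) := by
    have : (Function.uncurry fun z u => (Ioi (|z| + |z - b|)).indicator W u) =
        {p : ℝ × ℝ | |p.1| + |p.1 - b| < p.2}.indicator (fun p => W p.2) := by
      ext p
      by_cases h : |p.1| + |p.1 - b| < p.2 <;>
        simp [Function.uncurry, Set.indicator, h, mem_Ioi]
    rw [this]
    exact (hWm.comp measurable_snd).indicator hT
  calc ∫⁻ z : ℝ, ∫⁻ u in Ioi (|z| + |z - b|), W u
      = ∫⁻ z : ℝ, ∫⁻ u : ℝ, (Ioi (|z| + |z - b|)).indicator W u := by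
        exact lintegral_congr h1
    _ = ∫⁻ u : ℝ, ∫⁻ z : ℝ, (Ioi (|z| + |z - b|)).indicator W u := by
        exact lintegral_lintegral_swap huncurry.aemeasurable
    _ = ∫⁻ u : ℝ, W u * volume {z : ℝ | |z| + |z - b| < u} := by
        refine lintegral_congr fun u => ?_
        have : (fun z : ℝ => (Ioi (|z| + |z - b|)).indicator W u) =
            fun z : ℝ => ({z : ℝ | |z| + |z - b| < u}).indicator (fun _ => W u) z := by
          ext z
          by_cases h : |z| + |z - b| < u <;> simp [Set.indicator, h, mem_Ioi]
        rw [this, lintegral_indicator, setLIntegral_const]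
        apply measurableSet_lt
        · exact ((continuous_abs).add ((continuous_id.sub continuous_const).abs)).measurable
        · exact measurable_const
    _ = ∫⁻ u : ℝ, (Ioi b).indicator (fun u => ENNReal.ofReal (Real.exp (-k * u))) u := by
        refine lintegral_congr fun u => ?_
        rcases le_or_gt u b with h | h
        · have hempty : {z : ℝ | |z| + |z - b| < u} = ∅ := by
            ext z
            simp only [mem_setOf_eq, mem_empty_iff_false, iff_false, not_lt]
            have : b ≤ |z| + |z - b| := by
              have := abs_sub z (z - b)
              simp only [sub_sub_cancel] at this
              calc b = |b| := (abs_of_nonneg hb).symm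
                _ ≤ |z| + |z - b| := by simpa using this
            linarith
          rw [hempty]
          simp [Set.indicator, not_lt.2 h, measure_empty]
        · have hset : {z : ℝ | |z| + |z - b| < u} = Ioo ((b - u)/2) ((b + u)/2) := by
            ext z
            simp only [mem_setOf_eq, mem_Ioo]
            constructor
            · intro hz
              constructor
              · have h1 : -z ≤ |z| := neg_le_abs z
                have h2 : -(z - b) ≤ |z - b| := neg_le_abs _
                linarith
              · have h1 : z ≤ |z| := le_abs_self z
                have h2 : z - b ≤ |z - b| := le_abs_self _
                linarith
            · rintro ⟨hz1, hz2⟩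
              rcases le_or_gt 0 z with hz0 | hz0 <;> rcases le_or_gt z b with hzb | hzb
              · rw [abs_of_nonneg hz0, abs_of_nonpos (by linarith)]
                linarith
              · rw [abs_of_nonneg hz0, abs_of_pos (by linarith)]
                linarith
              · rw [abs_of_neg hz0, abs_of_nonpos (by linarith)]
                linarith
              · linarith
          rw [hset, Real.volume_Ioo, Set.indicator_of_mem (mem_Ioi.2 h)]
          have hu0 : 0 < u := lt_of_le_of_lt hb h
          rw [show (b + u)/2 - (b - u)/2 = u by ring, hW]
          rw [← ENNReal.ofReal_mul (by positivity)]
          rw [div_mul_cancel₀ _ hu0.ne']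
    _ = ∫⁻ u in Ioi b, ENNReal.ofReal (Real.exp (-k * u)) := by
        rw [lintegral_indicator measurableSet_Ioi]
    _ = ENNReal.ofReal (Real.exp (-k * b) / k) := by
        rw [← ofReal_integral_eq_lintegral_ofReal (exp_neg_integrableOn_Ioi b hk)
          (Filter.Eventually.of_forall fun x => (Real.exp_pos _).le)]
        congr 1
        have h : ∀ x ∈ Ioi b, HasDerivAt (fun u => -Real.exp (-k * u) / k) (Real.exp (-k * x)) x := by
          intro x _
          have h1 : HasDerivAt (fun u : ℝ => -k * u) (-k) x := by
            simpa using (hasDerivAt_id x).const_mul (-k)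
          have h2 := (h1.exp).neg.div_const k
          refine h2.congr_deriv ?_
          field_simp
        have hcont : ContinuousWithinAt (fun u => -Real.exp (-k * u) / k) (Ici b) b :=
          (((Real.continuous_exp.comp (continuous_const.mul continuous_id)).neg).div_const k).continuousWithinAt
        have htend : Filter.Tendsto (fun u => -Real.exp (-k * u) / k) Filter.atTop (nhds 0) := by
          have h5 : Filter.Tendsto (fun u : ℝ => Real.exp (-k * u)) Filter.atTop (nhds 0) := by
            apply Real.tendsto_exp_atBot.comp
            exact Filter.tendsto_id.const_mul_atTop_of_neg (neg_neg_iff_pos.2 hk)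
          simpa using (h5.neg).div_const k
        have := integral_Ioi_of_hasDerivAt_of_tendsto hcont h (exp_neg_integrableOn_Ioi b hk) htend
        rw [this]
        field_simp
        ring







lemma lintegral_euc3 (g : ℝ × ℝ × ℝ → ℝ≥0∞) (hg : Measurable g) :
    ∫⁻ y : E3, g (y 0, y 1, y 2) = ∫⁻ q : ℝ × ℝ × ℝ, g q := by
  have h1 := EuclideanSpace.volume_preserving_symm_measurableEquiv_toLp (Fin 3)
  have h2 := MeasureTheory.volume_preserving_piFinSuccAbove (fun _ : Fin 3 => ℝ) 0
  have h3 := (MeasurePreserving.id (volume : Measure ℝ)).prod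
    (MeasureTheory.volume_preserving_finTwoArrow ℝ)
  have hcomp := (h3.comp h2).comp h1
  have heval : ∀ y : E3,
      (Prod.map id ⇑MeasurableEquiv.finTwoArrow)
        ((MeasurableEquiv.piFinSuccAbove (fun _ : Fin 3 => ℝ) 0)
          ((MeasurableEquiv.toLp 2 (Fin 3 → ℝ)).symm y)) = (y 0, y 1, y 2) := by
    intro y
    rfl
  have hthis := hcomp.lintegral_comp hg
  rw [MeasureTheory.Measure.volume_eq_prod ℝ (ℝ × ℝ), ← hthis]
  refine lintegral_congr fun y => ?_
  rw [Function.comp_apply, Function.comp_apply, heval]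

lemma exists_basis (a : E3) :
    ∃ B : OrthonormalBasis (Fin 3) ℝ E3, ∀ j, B.repr a j = if j = 0 then ‖a‖ else 0 := by
  rcases eq_or_ne a 0 with rfl | ha
  · refine ⟨EuclideanSpace.basisFun (Fin 3) ℝ, fun j => ?_⟩
    simp
  · have hnorm : ‖(‖a‖⁻¹ • a : E3)‖ = 1 := by
      rw [norm_smul, norm_inv, norm_norm, inv_mul_cancel₀ (norm_ne_zero_iff.2 ha)]
    have horth : Orthonormal ℝ (({0} : Set (Fin 3)).restrict (fun _ : Fin 3 => (‖a‖⁻¹ • a : E3))) := by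
      rw [orthonormal_iff_ite]
      rintro ⟨i, hi⟩ ⟨j, hj⟩
      have hij : (⟨i, hi⟩ : ({0} : Set (Fin 3))) = ⟨j, hj⟩ :=
        Subtype.ext ((mem_singleton_iff.1 hi).trans (mem_singleton_iff.1 hj).symm)
      rw [hij]
      simp only [if_pos rfl, restrict_apply]
      rw [real_inner_self_eq_norm_sq]
      show ‖(‖a‖⁻¹ • a : E3)‖ ^ 2 = _
      rw [hnorm]
      norm_num
    obtain ⟨B, hB⟩ := Orthonormal.exists_orthonormalBasis_extension_of_card_eq
      (by simp [finrank_euclideanSpace_fin]) horth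
    refine ⟨B, fun j => ?_⟩
    have hB0 : B 0 = ‖a‖⁻¹ • a := hB 0 rfl
    have ha' : a = ‖a‖ • (‖a‖⁻¹ • a : E3) := by
      rw [smul_smul, mul_inv_cancel₀ (norm_ne_zero_iff.2 ha), one_smul]
    calc B.repr a j = B.repr (‖a‖ • B 0) j := by rw [hB0, ← ha']
      _ = (‖a‖ • B.repr (B 0)) j := by rw [_root_.map_smul]
      _ = ‖a‖ * (B.repr (B 0)) j := rfl
      _ = ‖a‖ * (EuclideanSpace.single 0 (1:ℝ)) j := by rw [OrthonormalBasis.repr_self]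
      _ = _ := by
        rw [EuclideanSpace.single_apply]
        by_cases h : j = 0 <;> simp [h]

lemma cyl (a : E3) (F : ℝ → ℝ → ℝ≥0∞) (hF : Measurable (Function.uncurry F)) :
    ∫⁻ x : E3, F ‖x‖ ‖x - a‖ =
      ∫⁻ z : ℝ, ∫⁻ p : ℝ × ℝ,
        F (Real.sqrt (z ^ 2 + (p.1 ^ 2 + p.2 ^ 2)))
          (Real.sqrt ((z - ‖a‖) ^ 2 + (p.1 ^ 2 + p.2 ^ 2))) := by
  obtain ⟨B, hB⟩ := exists_basis a
  have hmeas1 : Measurable fun x : E3 => F ‖x‖ ‖x - a‖ :=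
    hF.comp ((measurable_norm).prodMk ((measurable_id.sub_const a).norm))
  have step1 : ∫⁻ x : E3, F ‖x‖ ‖x - a‖ =
      ∫⁻ y : E3, F ‖y‖ ‖y - B.repr a‖ := by
    rw [← (B.measurePreserving_repr_symm).lintegral_comp hmeas1]
    refine lintegral_congr fun y => ?_
    have e1 : ‖(B.repr.symm y : E3)‖ = ‖y‖ := B.repr.symm.norm_map y
    have e2 : ‖(B.repr.symm y : E3) - a‖ = ‖y - B.repr a‖ := by
      have : (B.repr.symm y : E3) - a = B.repr.symm (y - B.repr a) := by
        rw [map_sub, B.repr.symm_apply_apply]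
      rw [this, B.repr.symm.norm_map]
    rw [e1, e2]
  have hnorm3 : ∀ y : E3, ‖y‖ = Real.sqrt (y 0 ^ 2 + (y 1 ^ 2 + y 2 ^ 2)) := by
    intro y
    rw [EuclideanSpace.norm_eq]
    congr 1
    rw [Fin.sum_univ_three]
    simp [Real.norm_eq_abs, sq_abs]
    ring
  have step2 : ∫⁻ y : E3, F ‖y‖ ‖y - B.repr a‖ =
      ∫⁻ y : E3, F (Real.sqrt (y 0 ^ 2 + (y 1 ^ 2 + y 2 ^ 2)))
        (Real.sqrt ((y 0 - ‖a‖) ^ 2 + (y 1 ^ 2 + y 2 ^ 2))) := by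
    refine lintegral_congr fun y => ?_
    rw [hnorm3 y, hnorm3 (y - B.repr a)]
    congr 2
    · have h0 : (y - B.repr a) 0 = y 0 - ‖a‖ := by
        simp [hB 0]
      have h1 : (y - B.repr a) 1 = y 1 := by
        simp [hB 1]
      have h2 : (y - B.repr a) 2 = y 2 := by
        simp [hB 2]
      rw [h0, h1, h2]
  rw [step1, step2]
  have hg : Measurable fun q : ℝ × ℝ × ℝ =>
      F (Real.sqrt (q.1 ^ 2 + (q.2.1 ^ 2 + q.2.2 ^ 2)))
        (Real.sqrt ((q.1 - ‖a‖) ^ 2 + (q.2.1 ^ 2 + q.2.2 ^ 2))) := by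
    refine hF.comp (Measurable.prodMk ?_ ?_)
    · exact (continuous_fst.pow 2 |>.add ((continuous_fst.comp continuous_snd).pow 2 |>.add
        ((continuous_snd.comp continuous_snd).pow 2))).sqrt.measurable
    · exact (((continuous_fst.sub continuous_const).pow 2).add
        ((continuous_fst.comp continuous_snd).pow 2 |>.add
        ((continuous_snd.comp continuous_snd).pow 2))).sqrt.measurable
  rw [lintegral_euc3 _ hg]
  rw [MeasureTheory.Measure.volume_eq_prod]
  rw [lintegral_prod _ hg.aemeasurable]







-- placeholders for already-proven lemmas
lemma mexp (k : ℝ) : Measurable fun t : ℝ => Real.exp (-k * t) :=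
  Real.continuous_exp.measurable.comp (measurable_id.const_mul (-k))

lemma sqrt_add_pos {c ρ : ℝ} (hc : 0 ≤ c) (hρ : 0 < ρ) : 0 < Real.sqrt (c + ρ ^ 2) :=
  Real.sqrt_pos.2 (by nlinarith)

lemma N_val {k : ℝ} (hk : 0 < k) :
    ∫⁻ x : E3, ENNReal.ofReal ((Real.exp (-k * ‖x‖) / ‖x‖) ^ 2) = ENNReal.ofReal (2 * π / k) := by
  set F : ℝ → ℝ → ℝ≥0∞ := fun r _ => ENNReal.ofReal ((Real.exp (-k * r) / r) ^ 2) with hFdef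
  have hF : Measurable (Function.uncurry F) := by
    apply ENNReal.measurable_ofReal.comp
    exact (((mexp k).comp measurable_fst).div measurable_fst).pow_const 2
  have h0 := cyl 0 F hF
  have hzint : ∀ z : ℝ,
      (∫⁻ p : ℝ × ℝ, F (Real.sqrt (z ^ 2 + (p.1 ^ 2 + p.2 ^ 2)))
          (Real.sqrt ((z - ‖(0:E3)‖) ^ 2 + (p.1 ^ 2 + p.2 ^ 2)))) =
      ENNReal.ofReal (2 * π) * ∫⁻ u in Ioi (|z| + |z - 0|), ENNReal.ofReal (Real.exp (-k * u) / u) := by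
    intro z
    have hz2 : (0:ℝ) ≤ z ^ 2 := sq_nonneg z
    have hgm : Measurable fun n : ℝ =>
        ENNReal.ofReal ((Real.exp (-k * Real.sqrt (z ^ 2 + n)) / Real.sqrt (z ^ 2 + n)) ^ 2) := by
      apply ENNReal.measurable_ofReal.comp
      have hs : Measurable fun n : ℝ => Real.sqrt (z ^ 2 + n) :=
        (continuous_const.add continuous_id).sqrt.measurable
      exact (((mexp k).comp hs).div hs).pow_const 2
    have hrad := lintegral_radial _ hgm
    have e1 : (∫⁻ p : ℝ × ℝ, F (Real.sqrt (z ^ 2 + (p.1 ^ 2 + p.2 ^ 2)))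
          (Real.sqrt ((z - ‖(0:E3)‖) ^ 2 + (p.1 ^ 2 + p.2 ^ 2)))) =
        ∫⁻ p : ℝ × ℝ,
          ENNReal.ofReal ((Real.exp (-k * Real.sqrt (z ^ 2 + (p.1 ^ 2 + p.2 ^ 2))) /
            Real.sqrt (z ^ 2 + (p.1 ^ 2 + p.2 ^ 2))) ^ 2) := rfl
    rw [e1, hrad]
    congr 1
    -- now the ρ integral
    have e2 : ∀ ρ ∈ Ioi (0:ℝ),
        ENNReal.ofReal ρ *
          ENNReal.ofReal ((Real.exp (-k * Real.sqrt (z ^ 2 + ρ ^ 2)) / Real.sqrt (z ^ 2 + ρ ^ 2)) ^ 2) =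
        ENNReal.ofReal (ρ / Real.sqrt (z ^ 2 + ρ ^ 2) + ρ / Real.sqrt (z ^ 2 + ρ ^ 2)) *
          ENNReal.ofReal (Real.exp (-k * (Real.sqrt (z ^ 2 + ρ ^ 2) + Real.sqrt (z ^ 2 + ρ ^ 2))) /
            (Real.sqrt (z ^ 2 + ρ ^ 2) + Real.sqrt (z ^ 2 + ρ ^ 2))) := by
      intro ρ hρ
      have hρ' : (0:ℝ) < ρ := hρ
      set r := Real.sqrt (z ^ 2 + ρ ^ 2) with hr
      have hrpos : 0 < r := sqrt_add_pos hz2 hρ'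
      rw [← ENNReal.ofReal_mul hρ'.le, ← ENNReal.ofReal_mul (by positivity)]
      congr 1
      rw [show (-k * (r + r)) = -k * r + -k * r by ring, Real.exp_add]
      field_simp
    have e3 : (∫⁻ ρ in Ioi (0:ℝ), ENNReal.ofReal ρ *
          ENNReal.ofReal ((Real.exp (-k * Real.sqrt (z ^ 2 + ρ ^ 2)) / Real.sqrt (z ^ 2 + ρ ^ 2)) ^ 2)) =
        ∫⁻ u in Ioi (Real.sqrt (z ^ 2) + Real.sqrt (z ^ 2)),
          ENNReal.ofReal (Real.exp (-k * u) / u) := by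
      rw [cov_gen hz2 hz2 (fun u => ENNReal.ofReal (Real.exp (-k * u) / u))]
      exact setLIntegral_congr_fun measurableSet_Ioi e2
    rw [e3, Real.sqrt_sq_eq_abs]
    rw [show |z| + |z| = |z| + |z - 0| by rw [sub_zero]]
  calc ∫⁻ x : E3, ENNReal.ofReal ((Real.exp (-k * ‖x‖) / ‖x‖) ^ 2)
      = ∫⁻ z : ℝ, ∫⁻ p : ℝ × ℝ,
          F (Real.sqrt (z ^ 2 + (p.1 ^ 2 + p.2 ^ 2)))
            (Real.sqrt ((z - ‖(0:E3)‖) ^ 2 + (p.1 ^ 2 + p.2 ^ 2))) := h0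
    _ = ∫⁻ z : ℝ, ENNReal.ofReal (2 * π) *
          ∫⁻ u in Ioi (|z| + |z - 0|), ENNReal.ofReal (Real.exp (-k * u) / u) :=
        lintegral_congr hzint
    _ = ENNReal.ofReal (2 * π) *
          ∫⁻ z : ℝ, ∫⁻ u in Ioi (|z| + |z - 0|), ENNReal.ofReal (Real.exp (-k * u) / u) :=
        lintegral_const_mul' _ _ ENNReal.ofReal_ne_top
    _ = ENNReal.ofReal (2 * π) * ENNReal.ofReal (Real.exp (-k * 0) / k) := by
        rw [key_swap hk le_rfl]
    _ = ENNReal.ofReal (2 * π / k) := by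
        rw [← ENNReal.ofReal_mul (by positivity)]
        norm_num
        rw [div_eq_mul_inv]

lemma C_val {k : ℝ} (hk : 0 < k) (a : E3) :
    ∫⁻ x : E3, ENNReal.ofReal
        ((Real.exp (-k * ‖x - a‖) / ‖x - a‖) * (Real.exp (-k * ‖x‖) / ‖x‖)) =
      ENNReal.ofReal (2 * π * Real.exp (-k * ‖a‖) / k) := by
  set b := ‖a‖ with hb
  have hbnn : 0 ≤ b := norm_nonneg a
  set F : ℝ → ℝ → ℝ≥0∞ := fun r s =>
    ENNReal.ofReal ((Real.exp (-k * s) / s) * (Real.exp (-k * r) / r)) with hFdef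
  have hF : Measurable (Function.uncurry F) := by
    apply ENNReal.measurable_ofReal.comp
    exact (((mexp k).comp measurable_snd).div measurable_snd).mul
      (((mexp k).comp measurable_fst).div measurable_fst)
  have h0 := cyl a F hF
  have hzint : ∀ z : ℝ,
      (∫⁻ p : ℝ × ℝ, F (Real.sqrt (z ^ 2 + (p.1 ^ 2 + p.2 ^ 2)))
          (Real.sqrt ((z - b) ^ 2 + (p.1 ^ 2 + p.2 ^ 2)))) =
      ENNReal.ofReal (2 * π) * ∫⁻ u in Ioi (|z| + |z - b|), ENNReal.ofReal (Real.exp (-k * u) / u) := by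
    intro z
    have hz2 : (0:ℝ) ≤ z ^ 2 := sq_nonneg z
    have hzb2 : (0:ℝ) ≤ (z - b) ^ 2 := sq_nonneg _
    have hgm : Measurable fun n : ℝ =>
        ENNReal.ofReal ((Real.exp (-k * Real.sqrt ((z - b) ^ 2 + n)) / Real.sqrt ((z - b) ^ 2 + n)) *
          (Real.exp (-k * Real.sqrt (z ^ 2 + n)) / Real.sqrt (z ^ 2 + n))) := by
      apply ENNReal.measurable_ofReal.comp
      have hs1 : Measurable fun n : ℝ => Real.sqrt (z ^ 2 + n) :=
        (continuous_const.add continuous_id).sqrt.measurable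
      have hs2 : Measurable fun n : ℝ => Real.sqrt ((z - b) ^ 2 + n) :=
        (continuous_const.add continuous_id).sqrt.measurable
      exact ((((mexp k).comp hs2).div hs2)).mul ((((mexp k).comp hs1).div hs1))
    have hrad := lintegral_radial _ hgm
    have e1 : (∫⁻ p : ℝ × ℝ, F (Real.sqrt (z ^ 2 + (p.1 ^ 2 + p.2 ^ 2)))
          (Real.sqrt ((z - b) ^ 2 + (p.1 ^ 2 + p.2 ^ 2)))) =
        ∫⁻ p : ℝ × ℝ,
          ENNReal.ofReal ((Real.exp (-k * Real.sqrt ((z - b) ^ 2 + (p.1 ^ 2 + p.2 ^ 2))) /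
              Real.sqrt ((z - b) ^ 2 + (p.1 ^ 2 + p.2 ^ 2))) *
            (Real.exp (-k * Real.sqrt (z ^ 2 + (p.1 ^ 2 + p.2 ^ 2))) /
              Real.sqrt (z ^ 2 + (p.1 ^ 2 + p.2 ^ 2)))) := rfl
    rw [e1, hrad]
    congr 1
    have e2 : ∀ ρ ∈ Ioi (0:ℝ),
        ENNReal.ofReal ρ *
          ENNReal.ofReal ((Real.exp (-k * Real.sqrt ((z - b) ^ 2 + ρ ^ 2)) / Real.sqrt ((z - b) ^ 2 + ρ ^ 2)) *
            (Real.exp (-k * Real.sqrt (z ^ 2 + ρ ^ 2)) / Real.sqrt (z ^ 2 + ρ ^ 2))) =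
        ENNReal.ofReal (ρ / Real.sqrt (z ^ 2 + ρ ^ 2) + ρ / Real.sqrt ((z - b) ^ 2 + ρ ^ 2)) *
          ENNReal.ofReal (Real.exp (-k * (Real.sqrt (z ^ 2 + ρ ^ 2) + Real.sqrt ((z - b) ^ 2 + ρ ^ 2))) /
            (Real.sqrt (z ^ 2 + ρ ^ 2) + Real.sqrt ((z - b) ^ 2 + ρ ^ 2))) := by
      intro ρ hρ
      have hρ' : (0:ℝ) < ρ := hρ
      set r := Real.sqrt (z ^ 2 + ρ ^ 2) with hr
      set s := Real.sqrt ((z - b) ^ 2 + ρ ^ 2) with hs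
      have hrpos : 0 < r := sqrt_add_pos hz2 hρ'
      have hspos : 0 < s := sqrt_add_pos hzb2 hρ'
      rw [← ENNReal.ofReal_mul hρ'.le, ← ENNReal.ofReal_mul (by positivity)]
      congr 1
      rw [show (-k * (r + s)) = -k * r + -k * s by ring, Real.exp_add]
      field_simp
      ring
    have e3 : (∫⁻ ρ in Ioi (0:ℝ), ENNReal.ofReal ρ *
          ENNReal.ofReal ((Real.exp (-k * Real.sqrt ((z - b) ^ 2 + ρ ^ 2)) / Real.sqrt ((z - b) ^ 2 + ρ ^ 2)) *
            (Real.exp (-k * Real.sqrt (z ^ 2 + ρ ^ 2)) / Real.sqrt (z ^ 2 + ρ ^ 2)))) =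
        ∫⁻ u in Ioi (Real.sqrt (z ^ 2) + Real.sqrt ((z - b) ^ 2)),
          ENNReal.ofReal (Real.exp (-k * u) / u) := by
      rw [cov_gen hz2 hzb2 (fun u => ENNReal.ofReal (Real.exp (-k * u) / u))]
      exact setLIntegral_congr_fun measurableSet_Ioi e2
    rw [e3, Real.sqrt_sq_eq_abs, Real.sqrt_sq_eq_abs]
  calc ∫⁻ x : E3, ENNReal.ofReal
        ((Real.exp (-k * ‖x - a‖) / ‖x - a‖) * (Real.exp (-k * ‖x‖) / ‖x‖))
      = ∫⁻ z : ℝ, ∫⁻ p : ℝ × ℝ,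
          F (Real.sqrt (z ^ 2 + (p.1 ^ 2 + p.2 ^ 2)))
            (Real.sqrt ((z - b) ^ 2 + (p.1 ^ 2 + p.2 ^ 2))) := h0
    _ = ∫⁻ z : ℝ, ENNReal.ofReal (2 * π) *
          ∫⁻ u in Ioi (|z| + |z - b|), ENNReal.ofReal (Real.exp (-k * u) / u) :=
        lintegral_congr hzint
    _ = ENNReal.ofReal (2 * π) *
          ∫⁻ z : ℝ, ∫⁻ u in Ioi (|z| + |z - b|), ENNReal.ofReal (Real.exp (-k * u) / u) :=
        lintegral_const_mul' _ _ ENNReal.ofReal_ne_top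
    _ = ENNReal.ofReal (2 * π) * ENNReal.ofReal (Real.exp (-k * b) / k) := by
        rw [key_swap hk hbnn]
    _ = ENNReal.ofReal (2 * π * Real.exp (-k * b) / k) := by
        rw [← ENNReal.ofReal_mul (by positivity)]
        congr 1
        ring







lemma mG (k : ℝ) : Measurable fun y : E3 => Real.exp (-k * ‖y‖) / ‖y‖ :=
  ((mexp k).comp measurable_norm).div measurable_norm

lemma mGsub (k : ℝ) (a : E3) : Measurable fun x : E3 => Real.exp (-k * ‖x - a‖) / ‖x - a‖ :=
  (mG k).comp (measurable_id.sub_const a)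

lemma Gnn (k : ℝ) (y : E3) : 0 ≤ Real.exp (-k * ‖y‖) / ‖y‖ :=
  div_nonneg (Real.exp_pos _).le (norm_nonneg y)

lemma Hsq_le {k : ℝ} (hk : 0 < k) (a : E3) :
    ∫⁻ x : E3, ENNReal.ofReal
        ((Real.exp (-k * ‖x - a‖) / ‖x - a‖ - Real.exp (-k * ‖x‖) / ‖x‖) ^ 2) ≤
      ENNReal.ofReal (2 * π * (1 + ‖a‖ ^ 2)) := by
  set b := ‖a‖ with hbdef
  have hbnn : (0:ℝ) ≤ b := norm_nonneg a
  set A : E3 → ℝ := fun x => Real.exp (-k * ‖x - a‖) / ‖x - a‖ with hA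
  set B : E3 → ℝ := fun x => Real.exp (-k * ‖x‖) / ‖x‖ with hB
  have hAnn : ∀ x, 0 ≤ A x := fun x => Gnn k _
  have hBnn : ∀ x, 0 ≤ B x := fun x => Gnn k _
  have htrans : ∫⁻ x : E3, ENNReal.ofReal (A x ^ 2) = ENNReal.ofReal (2 * π / k) := by
    rw [← N_val hk]
    exact (measurePreserving_sub_right volume a).lintegral_comp
      (ENNReal.measurable_ofReal.comp ((mG k).pow_const 2))
  have hNB : ∫⁻ x : E3, ENNReal.ofReal (B x ^ 2) = ENNReal.ofReal (2 * π / k) := N_val hk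
  have hC : ∫⁻ x : E3, ENNReal.ofReal (A x * B x) =
      ENNReal.ofReal (2 * π * Real.exp (-k * b) / k) := C_val hk a
  have hexpand : ∀ x : E3, ENNReal.ofReal ((A x - B x) ^ 2) + ENNReal.ofReal (2 * (A x * B x)) =
      ENNReal.ofReal (A x ^ 2) + ENNReal.ofReal (B x ^ 2) := by
    intro x
    rw [← ENNReal.ofReal_add (sq_nonneg _) (mul_nonneg (by norm_num) (mul_nonneg (hAnn x) (hBnn x))),
      ← ENNReal.ofReal_add (sq_nonneg _) (sq_nonneg _)]
    congr 1
    ring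
  have hmA : Measurable fun x : E3 => ENNReal.ofReal ((A x - B x) ^ 2) :=
    ENNReal.measurable_ofReal.comp (((mGsub k a).sub (mG k)).pow_const 2)
  have hm2 : Measurable fun x : E3 => ENNReal.ofReal (2 * (A x * B x)) :=
    ENNReal.measurable_ofReal.comp (((mGsub k a).mul (mG k)).const_mul 2)
  have hmA2 : Measurable fun x : E3 => ENNReal.ofReal (A x ^ 2) :=
    ENNReal.measurable_ofReal.comp ((mGsub k a).pow_const 2)
  have hsum : (∫⁻ x : E3, ENNReal.ofReal ((A x - B x) ^ 2)) + ∫⁻ x : E3, ENNReal.ofReal (2 * (A x * B x)) =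
      ENNReal.ofReal (2 * π / k) + ENNReal.ofReal (2 * π / k) := by
    rw [← lintegral_add_left hmA, lintegral_congr hexpand, lintegral_add_left hmA2, htrans, hNB]
  have h2AB : ∫⁻ x : E3, ENNReal.ofReal (2 * (A x * B x)) =
      ENNReal.ofReal (4 * π * Real.exp (-k * b) / k) := by
    calc ∫⁻ x : E3, ENNReal.ofReal (2 * (A x * B x))
        = ∫⁻ x : E3, 2 * ENNReal.ofReal (A x * B x) := by
          refine lintegral_congr fun x => ?_
          rw [← ENNReal.ofReal_ofNat, ← ENNReal.ofReal_mul (by norm_num)]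
      _ = 2 * ∫⁻ x : E3, ENNReal.ofReal (A x * B x) := lintegral_const_mul' _ _ (by norm_num)
      _ = _ := by
          rw [hC, ← ENNReal.ofReal_ofNat, ← ENNReal.ofReal_mul (by norm_num)]
          congr 1
          ring
  rw [h2AB] at hsum
  -- real inequality
  have hreal : 2 * π / k + 2 * π / k ≤ 2 * π * (1 + b ^ 2) + 4 * π * Real.exp (-k * b) / k := by
    have hexp : 1 - Real.exp (-k * b) ≤ k * b := by
      have := Real.add_one_le_exp (-k * b)
      linarith
    have h2b : 2 * b ≤ 1 + b ^ 2 := by nlinarith [sq_nonneg (1 - b)]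
    have hπ : (0:ℝ) < π := Real.pi_pos
    have key : 4 * π / k - 4 * π * Real.exp (-k * b) / k ≤ 2 * π * (1 + b ^ 2) := by
      have e1 : 4 * π / k - 4 * π * Real.exp (-k * b) / k = (4 * π / k) * (1 - Real.exp (-k * b)) := by
        field_simp
      rw [e1]
      calc (4 * π / k) * (1 - Real.exp (-k * b)) ≤ (4 * π / k) * (k * b) := by
            apply mul_le_mul_of_nonneg_left hexp (by positivity)
        _ = 2 * π * (2 * b) := by field_simp; ring
        _ ≤ 2 * π * (1 + b ^ 2) := by nlinarith
    have e2 : 2 * π / k + 2 * π / k = 4 * π / k := by ring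
    linarith
  have hle : ENNReal.ofReal (2 * π / k) + ENNReal.ofReal (2 * π / k) ≤
      ENNReal.ofReal (2 * π * (1 + b ^ 2)) + ENNReal.ofReal (4 * π * Real.exp (-k * b) / k) := by
    rw [← ENNReal.ofReal_add (by positivity) (by positivity),
      ← ENNReal.ofReal_add (by positivity) (by positivity)]
    exact ENNReal.ofReal_le_ofReal hreal
  have := hsum.le.trans hle
  exact (ENNReal.add_le_add_iff_right ENNReal.ofReal_ne_top).1 this








end Stmt5Aux

open Stmt5Aux

theorem stmt_5 (δ lam k : ℝ) (hδ : δ ∈ Set.Ioo (0 : ℝ) 1) (hlam : 0 < lam) (hk : 0 < k)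
    (v : EuclideanSpace ℝ (Fin 3) → ℝ) (hv : Measurable v)
    (hv1 : Integrable (fun x : EuclideanSpace ℝ (Fin 3) =>
      ‖x‖ ^ 2 * (1 + ‖x‖ ^ δ) * (v x) ^ 2))
    (hv2 : Integrable (fun x : EuclideanSpace ℝ (Fin 3) =>
      (1 + ‖x‖ ^ δ) * (v x) ^ 2))
    (γ : ℝ)
    (hγ : γ = max (∫ x : EuclideanSpace ℝ (Fin 3), ‖x‖ ^ 2 * (1 + ‖x‖ ^ δ) * (v x) ^ 2)
                  (∫ x : EuclideanSpace ℝ (Fin 3), (1 + ‖x‖ ^ δ) * (v x) ^ 2))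
    (ψ : EuclideanSpace ℝ (Fin 3) → ℂ) (hψL2 : MemLp ψ 2)
    (hψnorm : ∫ x : EuclideanSpace ℝ (Fin 3), (1 + ‖x‖ ^ δ)⁻¹ * ‖ψ x‖ ^ 2 = 1)
    (hvψ : Integrable (fun x : EuclideanSpace ℝ (Fin 3) => (v x : ℂ) * ψ x))
    (heq : ∀ᵐ x : EuclideanSpace ℝ (Fin 3),
      ψ x = (lam / (4 * π)) * ∫ x' : EuclideanSpace ℝ (Fin 3),
        ((Real.exp (-k * ‖x - x'‖) / ‖x - x'‖ : ℝ) : ℂ) * (v x' : ℂ) * ψ x')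
    (f : EuclideanSpace ℝ (Fin 3) → ℂ)
    (hf : f = fun x : EuclideanSpace ℝ (Fin 3) =>
      (lam / (4 * π)) * ((Real.exp (-k * ‖x‖) / ‖x‖ : ℝ) : ℂ) *
        ∫ x' : EuclideanSpace ℝ (Fin 3), (v x' : ℂ) * ψ x') :
    ∫ x : EuclideanSpace ℝ (Fin 3), ‖ψ x - f x‖ ^ 2 ≤ lam ^ 2 * γ / (2 * π) := by
  have hπ : (0:ℝ) < π := Real.pi_pos
  have hrpnn : ∀ t : E3, (0:ℝ) ≤ ‖t‖ ^ δ := fun t => Real.rpow_nonneg (norm_nonneg t) δ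
  have hrp : ∀ t : E3, (0:ℝ) < 1 + ‖t‖ ^ δ := fun t => by have := hrpnn t; linarith
  have hwnn : ∀ t : E3, 0 ≤ (1 + ‖t‖ ^ δ) * v t ^ 2 := fun t =>
    mul_nonneg (hrp t).le (sq_nonneg _)
  have hwm : Measurable fun t : E3 => (1 + ‖t‖ ^ δ) * v t ^ 2 := by
    apply Measurable.mul ?_ (hv.pow_const 2)
    apply Measurable.add measurable_const
    fun_prop
  have hψm : AEStronglyMeasurable ψ volume := hψL2.aestronglyMeasurable
  -- normalization
  have hw2nn : ∀ x : E3, 0 ≤ (1 + ‖x‖ ^ δ)⁻¹ * ‖ψ x‖ ^ 2 := fun x =>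
    mul_nonneg (inv_nonneg.2 (hrp x).le) (sq_nonneg _)
  have hw2int : Integrable (fun x : E3 => (1 + ‖x‖ ^ δ)⁻¹ * ‖ψ x‖ ^ 2) := by
    by_contra hcon
    rw [integral_undef hcon] at hψnorm
    exact one_ne_zero hψnorm.symm
  have hB2 : ∫⁻ x : E3, ENNReal.ofReal ((1 + ‖x‖ ^ δ)⁻¹ * ‖ψ x‖ ^ 2) = 1 := by
    rw [← ofReal_integral_eq_lintegral_ofReal hw2int (Filter.Eventually.of_forall hw2nn),
      hψnorm, ENNReal.ofReal_one]
  -- Hoelder helper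
  have hsqrtm : Measurable fun t : E3 => Real.sqrt (1 + ‖t‖ ^ δ) := by fun_prop
  have hsqrtpos : ∀ t : E3, 0 < Real.sqrt (1 + ‖t‖ ^ δ) := fun t => Real.sqrt_pos.2 (hrp t)
  have hrpow2 : ∀ t : ℝ≥0∞, t ^ (2:ℝ) = t * t := fun t => by
    rw [show (2:ℝ) = ((2:ℕ):ℝ) by norm_num, ENNReal.rpow_natCast, sq]
  have holder : ∀ Φ : E3 → ℝ, Measurable Φ → (∀ t, 0 ≤ Φ t) →
      (∫⁻ x' : E3, ENNReal.ofReal (Φ x') * ENNReal.ofReal (|v x'| * ‖ψ x'‖)) ≤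
        (∫⁻ x' : E3, ENNReal.ofReal (Φ x' ^ 2 * ((1 + ‖x'‖ ^ δ) * v x' ^ 2))) ^ (1/2 : ℝ) := by
    intro Φ hΦm hΦnn
    set F1 : E3 → ℝ≥0∞ := fun t => ENNReal.ofReal (Φ t * (|v t| * Real.sqrt (1 + ‖t‖ ^ δ))) with hF1
    set F2 : E3 → ℝ≥0∞ := fun t => ENNReal.ofReal (‖ψ t‖ * (Real.sqrt (1 + ‖t‖ ^ δ))⁻¹) with hF2
    have hF1m : AEMeasurable F1 volume :=
      (ENNReal.measurable_ofReal.comp (hΦm.mul (hv.abs.mul hsqrtm))).aemeasurable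
    have hF2m : AEMeasurable F2 volume := by
      apply ENNReal.measurable_ofReal.comp_aemeasurable
      exact hψm.norm.aemeasurable.mul (hsqrtm.inv).aemeasurable
    have hpq : Real.HolderConjugate 2 2 := Real.HolderConjugate.two_two
    have hH := ENNReal.lintegral_mul_le_Lp_mul_Lq volume hpq hF1m hF2m
    have e1 : ∀ t : E3, (F1 * F2) t = ENNReal.ofReal (Φ t) * ENNReal.ofReal (|v t| * ‖ψ t‖) := by
      intro t
      have hS := hsqrtpos t
      show ENNReal.ofReal (Φ t * (|v t| * Real.sqrt (1 + ‖t‖ ^ δ))) *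
          ENNReal.ofReal (‖ψ t‖ * (Real.sqrt (1 + ‖t‖ ^ δ))⁻¹) = _
      rw [← ENNReal.ofReal_mul (mul_nonneg (hΦnn t) (mul_nonneg (abs_nonneg _) hS.le)),
        ← ENNReal.ofReal_mul (hΦnn t)]
      congr 1
      field_simp
    have e2 : ∀ t : E3, F1 t ^ (2:ℝ) = ENNReal.ofReal (Φ t ^ 2 * ((1 + ‖t‖ ^ δ) * v t ^ 2)) := by
      intro t
      have hS := hsqrtpos t
      rw [hrpow2, hF1]
      rw [← ENNReal.ofReal_mul (mul_nonneg (hΦnn t) (mul_nonneg (abs_nonneg _) hS.le))]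
      congr 1
      have h1 : Real.sqrt (1 + ‖t‖ ^ δ) ^ 2 = 1 + ‖t‖ ^ δ := Real.sq_sqrt (hrp t).le
      rw [show Φ t * (|v t| * Real.sqrt (1 + ‖t‖ ^ δ)) * (Φ t * (|v t| * Real.sqrt (1 + ‖t‖ ^ δ))) =
        Φ t ^ 2 * (Real.sqrt (1 + ‖t‖ ^ δ) ^ 2 * |v t| ^ 2) from by ring, h1, sq_abs]
    have e3 : ∀ t : E3, F2 t ^ (2:ℝ) = ENNReal.ofReal ((1 + ‖t‖ ^ δ)⁻¹ * ‖ψ t‖ ^ 2) := by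
      intro t
      have hS := hsqrtpos t
      rw [hrpow2, hF2]
      rw [← ENNReal.ofReal_mul (mul_nonneg (norm_nonneg _) (inv_nonneg.2 hS.le))]
      congr 1
      have h1 : Real.sqrt (1 + ‖t‖ ^ δ) ^ 2 = 1 + ‖t‖ ^ δ := Real.sq_sqrt (hrp t).le
      field_simp
      nlinarith [h1]
    calc (∫⁻ x' : E3, ENNReal.ofReal (Φ x') * ENNReal.ofReal (|v x'| * ‖ψ x'‖))
        = ∫⁻ x' : E3, (F1 * F2) x' := lintegral_congr fun t => (e1 t).symm
      _ ≤ (∫⁻ t : E3, F1 t ^ (2:ℝ)) ^ (1/2:ℝ) * (∫⁻ t : E3, F2 t ^ (2:ℝ)) ^ (1/2:ℝ) := hH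
      _ = (∫⁻ x' : E3, ENNReal.ofReal (Φ x' ^ 2 * ((1 + ‖x'‖ ^ δ) * v x' ^ 2))) ^ (1/2:ℝ) := by
          rw [lintegral_congr e2, lintegral_congr e3, hB2, ENNReal.one_rpow, mul_one]
  -- finiteness of the Green-square integral
  have hQjm : Measurable (Function.uncurry fun x x' : E3 =>
      ENNReal.ofReal ((Real.exp (-k * ‖x - x'‖) / ‖x - x'‖) ^ 2 * ((1 + ‖x'‖ ^ δ) * v x' ^ 2))) := by
    apply ENNReal.measurable_ofReal.comp
    exact ((((mG k).comp (measurable_fst.sub measurable_snd)).pow_const 2).mul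
      (hwm.comp measurable_snd))
  have hQm : Measurable fun x : E3 => ∫⁻ x' : E3,
      ENNReal.ofReal ((Real.exp (-k * ‖x - x'‖) / ‖x - x'‖) ^ 2 * ((1 + ‖x'‖ ^ δ) * v x' ^ 2)) :=
    Measurable.lintegral_prod_right hQjm
  have hwlint : ∫⁻ t : E3, ENNReal.ofReal ((1 + ‖t‖ ^ δ) * v t ^ 2) < ⊤ := by
    calc ∫⁻ t : E3, ENNReal.ofReal ((1 + ‖t‖ ^ δ) * v t ^ 2)
        ≤ ∫⁻ t : E3, ‖(1 + ‖t‖ ^ δ) * v t ^ 2‖ₑ := by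
          refine lintegral_mono fun t => ?_
          rw [← ofReal_norm, Real.norm_eq_abs]
          exact ENNReal.ofReal_le_ofReal (le_abs_self _)
      _ < ⊤ := hv2.hasFiniteIntegral
  have htransG : ∀ x' : E3, ∫⁻ x : E3,
      ENNReal.ofReal ((Real.exp (-k * ‖x - x'‖) / ‖x - x'‖) ^ 2) = ENNReal.ofReal (2 * π / k) := by
    intro x'
    rw [← N_val hk]
    exact (measurePreserving_sub_right volume x').lintegral_comp
      (ENNReal.measurable_ofReal.comp ((mG k).pow_const 2))
  have hQswap : ∫⁻ x : E3, ∫⁻ x' : E3,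
      ENNReal.ofReal ((Real.exp (-k * ‖x - x'‖) / ‖x - x'‖) ^ 2 * ((1 + ‖x'‖ ^ δ) * v x' ^ 2)) =
      ENNReal.ofReal (2 * π / k) * ∫⁻ t : E3, ENNReal.ofReal ((1 + ‖t‖ ^ δ) * v t ^ 2) := by
    rw [lintegral_lintegral_swap hQjm.aemeasurable]
    calc ∫⁻ x' : E3, ∫⁻ x : E3,
          ENNReal.ofReal ((Real.exp (-k * ‖x - x'‖) / ‖x - x'‖) ^ 2 * ((1 + ‖x'‖ ^ δ) * v x' ^ 2))
        = ∫⁻ x' : E3, (∫⁻ x : E3, ENNReal.ofReal ((Real.exp (-k * ‖x - x'‖) / ‖x - x'‖) ^ 2)) *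
            ENNReal.ofReal ((1 + ‖x'‖ ^ δ) * v x' ^ 2) := by
          refine lintegral_congr fun x' => ?_
          rw [← lintegral_mul_const' _ _ ENNReal.ofReal_ne_top]
          exact lintegral_congr fun x => by rw [← ENNReal.ofReal_mul (sq_nonneg _)]
      _ = ∫⁻ x' : E3, ENNReal.ofReal (2 * π / k) * ENNReal.ofReal ((1 + ‖x'‖ ^ δ) * v x' ^ 2) := by
          exact lintegral_congr fun x' => by rw [htransG x']
      _ = _ := lintegral_const_mul' _ _ ENNReal.ofReal_ne_top
  have hQae : ∀ᵐ x : E3, (∫⁻ x' : E3,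
      ENNReal.ofReal ((Real.exp (-k * ‖x - x'‖) / ‖x - x'‖) ^ 2 * ((1 + ‖x'‖ ^ δ) * v x' ^ 2))) < ⊤ := by
    refine ae_lt_top hQm ?_
    rw [hQswap]
    exact (ENNReal.mul_lt_top ENNReal.ofReal_lt_top hwlint).ne
  -- the K functional
  have hKjm : Measurable (Function.uncurry fun x x' : E3 =>
      ENNReal.ofReal ((Real.exp (-k * ‖x - x'‖) / ‖x - x'‖ - Real.exp (-k * ‖x‖) / ‖x‖) ^ 2 *
        ((1 + ‖x'‖ ^ δ) * v x' ^ 2))) := by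
    apply ENNReal.measurable_ofReal.comp
    refine Measurable.mul ?_ (hwm.comp measurable_snd)
    exact (((mG k).comp (measurable_fst.sub measurable_snd)).sub ((mG k).comp measurable_fst)).pow_const 2
  set c : ℝ := lam / (4 * π) with hcdef
  have hcpos : 0 < c := by positivity
  -- pointwise ae bound
  have hae : ∀ᵐ x : E3, ENNReal.ofReal (‖ψ x - f x‖ ^ 2) ≤ ENNReal.ofReal c ^ 2 *
      ∫⁻ x' : E3, ENNReal.ofReal ((Real.exp (-k * ‖x - x'‖) / ‖x - x'‖ - Real.exp (-k * ‖x‖) / ‖x‖) ^ 2 *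
        ((1 + ‖x'‖ ^ δ) * v x' ^ 2)) := by
    filter_upwards [heq, hQae] with x hx hxQ
    have hΦ1m : Measurable fun x' : E3 => Real.exp (-k * ‖x - x'‖) / ‖x - x'‖ :=
      (mG k).comp (measurable_const.sub measurable_id)
    have hΦ1nn : ∀ t : E3, 0 ≤ Real.exp (-k * ‖x - t‖) / ‖x - t‖ := fun t => Gnn k _
    -- integrability of the kernel integrand
    have hnormeq : ∀ t : E3, (‖((Real.exp (-k * ‖x - t‖) / ‖x - t‖ : ℝ) : ℂ) * (v t : ℂ) * ψ t‖ₑ) =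
        ENNReal.ofReal (Real.exp (-k * ‖x - t‖) / ‖x - t‖) * ENNReal.ofReal (|v t| * ‖ψ t‖) := by
      intro t
      rw [← ofReal_norm, norm_mul, norm_mul, Complex.norm_real, Complex.norm_real,
        Real.norm_eq_abs, Real.norm_eq_abs, abs_of_nonneg (hΦ1nn t)]
      rw [mul_assoc, ENNReal.ofReal_mul (hΦ1nn t)]
    have hint1 : Integrable (fun x' : E3 =>
        ((Real.exp (-k * ‖x - x'‖) / ‖x - x'‖ : ℝ) : ℂ) * (v x' : ℂ) * ψ x') := by
      refine ⟨((Complex.measurable_ofReal.comp hΦ1m).aestronglyMeasurable.mul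
        (Complex.measurable_ofReal.comp hv).aestronglyMeasurable).mul hψm, ?_⟩
      show (∫⁻ t : E3, ‖((Real.exp (-k * ‖x - t‖) / ‖x - t‖ : ℝ) : ℂ) * (v t : ℂ) * ψ t‖ₑ) < ⊤
      calc (∫⁻ t : E3, ‖((Real.exp (-k * ‖x - t‖) / ‖x - t‖ : ℝ) : ℂ) * (v t : ℂ) * ψ t‖ₑ)
          = ∫⁻ t : E3, ENNReal.ofReal (Real.exp (-k * ‖x - t‖) / ‖x - t‖) *
              ENNReal.ofReal (|v t| * ‖ψ t‖) := lintegral_congr hnormeq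
        _ ≤ (∫⁻ x' : E3, ENNReal.ofReal ((Real.exp (-k * ‖x - x'‖) / ‖x - x'‖) ^ 2 *
              ((1 + ‖x'‖ ^ δ) * v x' ^ 2))) ^ (1/2:ℝ) := holder _ hΦ1m hΦ1nn
        _ < ⊤ := ENNReal.rpow_lt_top_of_nonneg (by norm_num) hxQ.ne
    have hint2 : Integrable (fun x' : E3 =>
        ((Real.exp (-k * ‖x‖) / ‖x‖ : ℝ) : ℂ) * ((v x' : ℂ) * ψ x')) :=
      hvψ.const_mul _
    -- identity
    have hsub : ψ x - f x = ((lam : ℂ) / (4 * (π : ℂ))) *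
        ∫ x' : E3, ((Real.exp (-k * ‖x - x'‖) / ‖x - x'‖ - Real.exp (-k * ‖x‖) / ‖x‖ : ℝ) : ℂ) *
          ((v x' : ℂ) * ψ x') := by
      rw [hx]
      simp only [hf]
      rw [mul_assoc ((lam : ℂ) / (4 * (π : ℂ))),
        ← integral_const_mul ((Real.exp (-k * ‖x‖) / ‖x‖ : ℝ) : ℂ), ← mul_sub]
      congr 1
      rw [← integral_sub hint1 hint2]
      refine integral_congr_ae (Filter.Eventually.of_forall fun x' => ?_)
      push_cast
      ring
    -- norm bound
    have hnormeq2 : ∀ t : E3, ENNReal.ofReal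
        ‖((Real.exp (-k * ‖x - t‖) / ‖x - t‖ - Real.exp (-k * ‖x‖) / ‖x‖ : ℝ) : ℂ) *
          ((v t : ℂ) * ψ t)‖ =
        ENNReal.ofReal (|Real.exp (-k * ‖x - t‖) / ‖x - t‖ - Real.exp (-k * ‖x‖) / ‖x‖|) *
          ENNReal.ofReal (|v t| * ‖ψ t‖) := by
      intro t
      rw [norm_mul, norm_mul, Complex.norm_real, Complex.norm_real, Real.norm_eq_abs,
        Real.norm_eq_abs, ENNReal.ofReal_mul (abs_nonneg _)]
    have hΔm : Measurable fun x' : E3 =>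
        |Real.exp (-k * ‖x - x'‖) / ‖x - x'‖ - Real.exp (-k * ‖x‖) / ‖x‖| :=
      (hΦ1m.sub measurable_const).abs
    have hL : (∫⁻ t : E3, ENNReal.ofReal
        ‖((Real.exp (-k * ‖x - t‖) / ‖x - t‖ - Real.exp (-k * ‖x‖) / ‖x‖ : ℝ) : ℂ) *
          ((v t : ℂ) * ψ t)‖) ≤
        (∫⁻ x' : E3, ENNReal.ofReal ((Real.exp (-k * ‖x - x'‖) / ‖x - x'‖ -
            Real.exp (-k * ‖x‖) / ‖x‖) ^ 2 * ((1 + ‖x'‖ ^ δ) * v x' ^ 2))) ^ (1/2:ℝ) := by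
      rw [lintegral_congr hnormeq2]
      have := holder _ hΔm fun t => abs_nonneg _
      calc (∫⁻ t : E3, ENNReal.ofReal (|Real.exp (-k * ‖x - t‖) / ‖x - t‖ - Real.exp (-k * ‖x‖) / ‖x‖|) *
            ENNReal.ofReal (|v t| * ‖ψ t‖)) ≤
          (∫⁻ x' : E3, ENNReal.ofReal (|Real.exp (-k * ‖x - x'‖) / ‖x - x'‖ -
              Real.exp (-k * ‖x‖) / ‖x‖| ^ 2 * ((1 + ‖x'‖ ^ δ) * v x' ^ 2))) ^ (1/2:ℝ) := this
        _ = _ := by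
            congr 1
            exact lintegral_congr fun t => by rw [sq_abs]
    -- assemble pointwise
    have hnrm : ‖ψ x - f x‖ ≤ c * (∫⁻ t : E3, ENNReal.ofReal
        ‖((Real.exp (-k * ‖x - t‖) / ‖x - t‖ - Real.exp (-k * ‖x‖) / ‖x‖ : ℝ) : ℂ) *
          ((v t : ℂ) * ψ t)‖).toReal := by
      rw [hsub, norm_mul]
      have hCnorm : ‖(lam : ℂ) / (4 * (π : ℂ))‖ = c := by
        rw [show ((lam : ℂ) / (4 * (π : ℂ))) = ((lam / (4 * π) : ℝ) : ℂ) by push_cast; ring]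
        rw [Complex.norm_real, Real.norm_eq_abs, abs_of_pos hcpos]
      rw [hCnorm]
      exact mul_le_mul_of_nonneg_left (norm_integral_le_lintegral_norm _) hcpos.le
    have h1 : ENNReal.ofReal ‖ψ x - f x‖ ≤ ENNReal.ofReal c *
        (∫⁻ x' : E3, ENNReal.ofReal ((Real.exp (-k * ‖x - x'‖) / ‖x - x'‖ -
            Real.exp (-k * ‖x‖) / ‖x‖) ^ 2 * ((1 + ‖x'‖ ^ δ) * v x' ^ 2))) ^ (1/2:ℝ) := by
      calc ENNReal.ofReal ‖ψ x - f x‖ ≤ ENNReal.ofReal (c * (∫⁻ t : E3, ENNReal.ofReal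
            ‖((Real.exp (-k * ‖x - t‖) / ‖x - t‖ - Real.exp (-k * ‖x‖) / ‖x‖ : ℝ) : ℂ) *
              ((v t : ℂ) * ψ t)‖).toReal) := ENNReal.ofReal_le_ofReal hnrm
        _ = ENNReal.ofReal c * ENNReal.ofReal ((∫⁻ t : E3, ENNReal.ofReal
            ‖((Real.exp (-k * ‖x - t‖) / ‖x - t‖ - Real.exp (-k * ‖x‖) / ‖x‖ : ℝ) : ℂ) *
              ((v t : ℂ) * ψ t)‖).toReal) := ENNReal.ofReal_mul hcpos.le
        _ ≤ ENNReal.ofReal c * ∫⁻ t : E3, ENNReal.ofReal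
            ‖((Real.exp (-k * ‖x - t‖) / ‖x - t‖ - Real.exp (-k * ‖x‖) / ‖x‖ : ℝ) : ℂ) *
              ((v t : ℂ) * ψ t)‖ := mul_le_mul_right ENNReal.ofReal_toReal_le _
        _ ≤ _ := mul_le_mul_right hL _
    calc ENNReal.ofReal (‖ψ x - f x‖ ^ 2) = ENNReal.ofReal ‖ψ x - f x‖ ^ 2 :=
          ENNReal.ofReal_pow (norm_nonneg _) 2
      _ ≤ (ENNReal.ofReal c *
          (∫⁻ x' : E3, ENNReal.ofReal ((Real.exp (-k * ‖x - x'‖) / ‖x - x'‖ -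
              Real.exp (-k * ‖x‖) / ‖x‖) ^ 2 * ((1 + ‖x'‖ ^ δ) * v x' ^ 2))) ^ (1/2:ℝ)) ^ 2 := by
          gcongr
      _ = _ := by
          rw [mul_pow]
          congr 1
          rw [← ENNReal.rpow_natCast (_ ^ (1/2:ℝ)) 2, ← ENNReal.rpow_mul]
          norm_num
  -- global bound
  have hγnn : 0 ≤ γ := by
    rw [hγ]
    refine le_trans (integral_nonneg hwnn) (le_max_right _ _)
  have hint3 : Integrable (fun x' : E3 => 2 * π * ((1 + ‖x'‖ ^ 2) * ((1 + ‖x'‖ ^ δ) * v x' ^ 2))) := by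
    refine (((hv2.add hv1).const_mul (2 * π)).congr ?_)
    refine Filter.Eventually.of_forall fun x => ?_
    simp only [Pi.add_apply]
    ring
  have hrealint : ∫ x' : E3, 2 * π * ((1 + ‖x'‖ ^ 2) * ((1 + ‖x'‖ ^ δ) * v x' ^ 2)) ≤ 4 * π * γ := by
    have e : ∫ x' : E3, 2 * π * ((1 + ‖x'‖ ^ 2) * ((1 + ‖x'‖ ^ δ) * v x' ^ 2)) =
        2 * π * ((∫ x : E3, (1 + ‖x‖ ^ δ) * v x ^ 2) +
          ∫ x : E3, ‖x‖ ^ 2 * (1 + ‖x‖ ^ δ) * v x ^ 2) := by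
      rw [← integral_add hv2 hv1, ← integral_const_mul]
      refine integral_congr_ae (Filter.Eventually.of_forall fun x => ?_)
      ring
    rw [e]
    have g1 : (∫ x : E3, (1 + ‖x‖ ^ δ) * v x ^ 2) ≤ γ := hγ ▸ le_max_right _ _
    have g2 : (∫ x : E3, ‖x‖ ^ 2 * (1 + ‖x‖ ^ δ) * v x ^ 2) ≤ γ := hγ ▸ le_max_left _ _
    nlinarith
  have hKbound : ∫⁻ x : E3, (∫⁻ x' : E3,
      ENNReal.ofReal ((Real.exp (-k * ‖x - x'‖) / ‖x - x'‖ - Real.exp (-k * ‖x‖) / ‖x‖) ^ 2 *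
        ((1 + ‖x'‖ ^ δ) * v x' ^ 2))) ≤ ENNReal.ofReal (4 * π * γ) := by
    rw [lintegral_lintegral_swap hKjm.aemeasurable]
    calc ∫⁻ x' : E3, ∫⁻ x : E3,
          ENNReal.ofReal ((Real.exp (-k * ‖x - x'‖) / ‖x - x'‖ - Real.exp (-k * ‖x‖) / ‖x‖) ^ 2 *
            ((1 + ‖x'‖ ^ δ) * v x' ^ 2))
        = ∫⁻ x' : E3, (∫⁻ x : E3, ENNReal.ofReal ((Real.exp (-k * ‖x - x'‖) / ‖x - x'‖ -
            Real.exp (-k * ‖x‖) / ‖x‖) ^ 2)) * ENNReal.ofReal ((1 + ‖x'‖ ^ δ) * v x' ^ 2) := by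
          refine lintegral_congr fun x' => ?_
          rw [← lintegral_mul_const' _ _ ENNReal.ofReal_ne_top]
          exact lintegral_congr fun x => by rw [← ENNReal.ofReal_mul (sq_nonneg _)]
      _ ≤ ∫⁻ x' : E3, ENNReal.ofReal (2 * π * (1 + ‖x'‖ ^ 2)) *
            ENNReal.ofReal ((1 + ‖x'‖ ^ δ) * v x' ^ 2) := by
          refine lintegral_mono fun x' => ?_
          exact mul_le_mul_left (Hsq_le hk x') _
      _ = ∫⁻ x' : E3, ENNReal.ofReal (2 * π * ((1 + ‖x'‖ ^ 2) * ((1 + ‖x'‖ ^ δ) * v x' ^ 2))) := by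
          refine lintegral_congr fun x' => ?_
          rw [← ENNReal.ofReal_mul (by positivity)]
          congr 1
          ring
      _ = ENNReal.ofReal (∫ x' : E3, 2 * π * ((1 + ‖x'‖ ^ 2) * ((1 + ‖x'‖ ^ δ) * v x' ^ 2))) := by
          rw [ofReal_integral_eq_lintegral_ofReal hint3]
          refine Filter.Eventually.of_forall fun x => ?_
          have := hwnn x
          positivity
      _ ≤ _ := ENNReal.ofReal_le_ofReal hrealint
  have hTL : ∫⁻ x : E3, ENNReal.ofReal (‖ψ x - f x‖ ^ 2) ≤ ENNReal.ofReal (lam ^ 2 * γ / (4 * π)) := by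
    calc ∫⁻ x : E3, ENNReal.ofReal (‖ψ x - f x‖ ^ 2)
        ≤ ∫⁻ x : E3, ENNReal.ofReal c ^ 2 * ∫⁻ x' : E3,
            ENNReal.ofReal ((Real.exp (-k * ‖x - x'‖) / ‖x - x'‖ - Real.exp (-k * ‖x‖) / ‖x‖) ^ 2 *
              ((1 + ‖x'‖ ^ δ) * v x' ^ 2)) := lintegral_mono_ae hae
      _ = ENNReal.ofReal c ^ 2 * ∫⁻ x : E3, ∫⁻ x' : E3,
            ENNReal.ofReal ((Real.exp (-k * ‖x - x'‖) / ‖x - x'‖ - Real.exp (-k * ‖x‖) / ‖x‖) ^ 2 *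
              ((1 + ‖x'‖ ^ δ) * v x' ^ 2)) :=
          lintegral_const_mul' _ _ (by simp [ENNReal.pow_ne_top, ENNReal.ofReal_ne_top])
      _ ≤ ENNReal.ofReal c ^ 2 * ENNReal.ofReal (4 * π * γ) := mul_le_mul_right hKbound _
      _ = ENNReal.ofReal (c ^ 2 * (4 * π * γ)) := by
          rw [← ENNReal.ofReal_pow hcpos.le, ← ENNReal.ofReal_mul (by positivity)]
      _ = ENNReal.ofReal (lam ^ 2 * γ / (4 * π)) := by
          congr 1
          rw [hcdef]
          field_simp
  have haesmf : AEStronglyMeasurable f volume := by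
    rw [hf]
    exact ((measurable_const.mul (Complex.measurable_ofReal.comp (mG k))).mul
      measurable_const).aestronglyMeasurable
  have heqint : ∫ x : E3, ‖ψ x - f x‖ ^ 2 =
      (∫⁻ x : E3, ENNReal.ofReal (‖ψ x - f x‖ ^ 2)).toReal := by
    refine integral_eq_lintegral_of_nonneg_ae (Filter.Eventually.of_forall fun x => sq_nonneg _) ?_
    exact ((hψm.sub haesmf).norm.pow 2)
  rw [heqint]
  have hstep : (∫⁻ x : E3, ENNReal.ofReal (‖ψ x - f x‖ ^ 2)).toReal ≤ lam ^ 2 * γ / (4 * π) :=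
    ENNReal.toReal_le_of_le_ofReal (by positivity) hTL
  refine hstep.trans ?_
  gcongr
  norm_num

end
end

section
/- For every θ ∈ (0, π/2): lim_{k → 0⁺} (1 / ln(1/k)) ∫_{k sin θ}^{∞} ( e^{-2t cot θ} / t ) sin²(θ + t) dt = sin² θ. -/
open MeasureTheory Real Filter

theorem stmt_12 (θ : ℝ) (hθ : θ ∈ Set.Ioo 0 (π / 2)) :
    Tendsto (fun k : ℝ =>
        (1 / Real.log (1 / k)) *
          ∫ t in Set.Ioi (k * Real.sin θ),
            Real.exp (-2 * t * (Real.cos θ / Real.sin θ)) / t * Real.sin (θ + t) ^ 2)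
      (nhdsWithin 0 (Set.Ioi 0)) (nhds (Real.sin θ ^ 2)) := by
  obtain ⟨hθ0, hθ2⟩ := hθ
  have hπ := Real.pi_pos
  set s : ℝ := Real.sin θ with hs_def
  set c : ℝ := Real.cos θ / Real.sin θ with hc_def
  set f : ℝ → ℝ := fun t => Real.exp (-2 * t * c) / t * Real.sin (θ + t) ^ 2 with hf_def
  have hs : 0 < s := Real.sin_pos_of_pos_of_lt_pi hθ0 (by linarith)
  have hcos : 0 < Real.cos θ := Real.cos_pos_of_mem_Ioo ⟨by linarith, hθ2⟩
  have hc : 0 < c := div_pos hcos hs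
  have hs1 : s < 1 := by
    have h := Real.strictMonoOn_sin (a := θ) (b := π / 2)
      ⟨by linarith, hθ2.le⟩ ⟨by linarith, le_refl _⟩ hθ2
    simpa [Real.sin_pi_div_two] using h
  -- integrability on Ioi a for a > 0
  have hcontOn : ∀ a : ℝ, 0 < a → ContinuousOn f (Set.Ioi a) := by
    intro a ha
    apply ContinuousOn.mul
    · apply ContinuousOn.div
      · exact (Real.continuous_exp.comp (by continuity)).continuousOn
      · exact continuousOn_id
      · intro t ht; exact ne_of_gt (lt_trans ha ht)
    · exact ((Real.continuous_sin.comp (by continuity)).pow 2).continuousOn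
  have hint : ∀ a : ℝ, 0 < a → IntegrableOn f (Set.Ioi a) := by
    intro a ha
    have hexp : IntegrableOn (fun t : ℝ => (1 / a) * Real.exp (-(2 * c) * t)) (Set.Ioi a) :=
      (exp_neg_integrableOn_Ioi a (by positivity)).const_mul _
    refine hexp.mono' ((hcontOn a ha).aestronglyMeasurable measurableSet_Ioi) ?_
    rw [ae_restrict_iff' measurableSet_Ioi]
    refine Filter.Eventually.of_forall (fun t ht => ?_)
    have ht0 : 0 < t := lt_trans ha ht
    rw [Real.norm_eq_abs, abs_of_nonneg (by positivity)]
    calc Real.exp (-2 * t * c) / t * Real.sin (θ + t) ^ 2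
        ≤ Real.exp (-2 * t * c) / t * 1 := by
          gcongr
          all_goals first | positivity | exact Real.sin_sq_le_one _
      _ = Real.exp (-2 * t * c) / t := mul_one _
      _ ≤ Real.exp (-2 * t * c) / a := by
          gcongr
          all_goals first | positivity | exact (Set.mem_Ioi.mp ht).le
      _ = 1 / a * Real.exp (-(2 * c) * t) := by
          rw [show -(2 * c) * t = -2 * t * c by ring]; ring
  -- pointwise difference bound on (0,1]
  have hdiff : ∀ t ∈ Set.Ioc (0 : ℝ) 1, ‖f t - s ^ 2 / t‖ ≤ 2 + 2 * c := by
    intro t ht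
    obtain ⟨ht0, ht1⟩ := ht
    have hrw : f t - s ^ 2 / t
        = (Real.exp (-2 * t * c) * Real.sin (θ + t) ^ 2 - s ^ 2) / t := by
      simp only [hf_def]
      field_simp
    rw [hrw, Real.norm_eq_abs, abs_div, abs_of_pos ht0, div_le_iff₀ ht0]
    set E := Real.exp (-2 * t * c) with hE_def
    set u := Real.sin (θ + t) with hu_def
    have hE1 : E ≤ 1 := Real.exp_le_one_iff.mpr (by nlinarith)
    have hE0 : 0 < E := Real.exp_pos _
    have hEx : 1 - E ≤ 2 * t * c := by
      nlinarith [Real.add_one_le_exp (-2 * t * c)]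
    have hsin : |u - s| ≤ t := by
      have h := Real.abs_sin_le_abs (x := t)
      calc |u - s| = |Real.sin (θ + t) - Real.sin θ| := rfl
        _ = |2 * Real.sin ((θ + t - θ) / 2) * Real.cos ((θ + t + θ) / 2)| := by
            rw [Real.sin_sub_sin]
        _ ≤ 2 * |Real.sin (t / 2)| * 1 := by
            rw [abs_mul, abs_mul, abs_two, show θ + t - θ = t by ring]
            gcongr
            all_goals first | positivity | exact Real.abs_cos_le_one _
        _ ≤ 2 * (|t| / 2) * 1 := by
            gcongr
            calc |Real.sin (t / 2)| ≤ |t / 2| := Real.abs_sin_le_abs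
              _ = |t| / 2 := by rw [abs_div, abs_two]
        _ = |t| := by ring
        _ = t := abs_of_pos ht0
    have hu1 : |u| ≤ 1 := Real.abs_sin_le_one _
    have hs1' : |s| ≤ 1 := Real.abs_sin_le_one _
    have h1 : |u ^ 2 - s ^ 2| ≤ 2 * t := by
      have hfact : u ^ 2 - s ^ 2 = (u - s) * (u + s) := by ring
      rw [hfact, abs_mul]
      have h2 : |u + s| ≤ 2 := by
        calc |u + s| ≤ |u| + |s| := abs_add_le _ _
          _ ≤ 2 := by linarith
      calc |u - s| * |u + s| ≤ t * 2 :=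
            mul_le_mul hsin h2 (abs_nonneg _) ht0.le
        _ = 2 * t := by ring
    calc |E * u ^ 2 - s ^ 2| = |E * (u ^ 2 - s ^ 2) - (1 - E) * s ^ 2| := by ring_nf
      _ ≤ |E * (u ^ 2 - s ^ 2)| + |(1 - E) * s ^ 2| := abs_sub _ _
      _ ≤ 1 * (2 * t) + (2 * t * c) * 1 := by
          rw [abs_mul, abs_mul]
          have b1 : |E| * |u ^ 2 - s ^ 2| ≤ 1 * (2 * t) :=
            mul_le_mul (by rw [abs_of_pos hE0]; exact hE1) h1 (abs_nonneg _) one_pos.le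
          have b2 : |1 - E| * |s ^ 2| ≤ 2 * t * c * 1 := by
            apply mul_le_mul (by rw [abs_of_nonneg (by linarith : (0:ℝ) ≤ 1 - E)]; exact hEx)
              (by rw [abs_of_nonneg (sq_nonneg _)]; exact Real.sin_sq_le_one θ)
              (abs_nonneg _) (by positivity)
          linarith
      _ = (2 + 2 * c) * t := by ring
  -- log integral
  have hlog : ∀ a : ℝ, 0 < a → a ≤ 1 →
      ∫ t in Set.Ioc a 1, s ^ 2 / t = s ^ 2 * (-Real.log a) := by
    intro a ha ha1
    rw [← intervalIntegral.integral_of_le ha1]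
    have h0 : (0 : ℝ) ∉ Set.uIcc a 1 := by
      rw [Set.uIcc_of_le ha1]
      intro h; exact absurd h.1 (not_le.mpr ha)
    simp_rw [div_eq_mul_one_div (s ^ 2)]
    rw [intervalIntegral.integral_const_mul, integral_one_div h0, one_div a, Real.log_inv]
  -- integrability of s^2 / t on Ioc a 1
  have hint2 : ∀ a : ℝ, 0 < a → IntegrableOn (fun t : ℝ => s ^ 2 / t) (Set.Ioc a 1) := by
    intro a ha
    have hco : ContinuousOn (fun t : ℝ => s ^ 2 / t) (Set.Ioc a 1) := by
      apply ContinuousOn.div continuousOn_const continuousOn_id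
      intro t ht; exact ne_of_gt (lt_of_lt_of_le ha ht.1.le)
    have hconst : IntegrableOn (fun _ : ℝ => s ^ 2 / a) (Set.Ioc a 1) :=
      integrableOn_const measure_Ioc_lt_top.ne
    refine hconst.mono' (hco.aestronglyMeasurable measurableSet_Ioc) ?_
    rw [ae_restrict_iff' measurableSet_Ioc]
    refine Filter.Eventually.of_forall (fun t ht => ?_)
    have ht0 : 0 < t := lt_of_lt_of_le ha ht.1.le
    rw [Real.norm_eq_abs, abs_of_nonneg (by positivity)]
    show s ^ 2 / t ≤ s ^ 2 / a
    exact div_le_div_of_nonneg_left (sq_nonneg s) ha ht.1.le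
  set C : ℝ := ∫ t in Set.Ioi (1 : ℝ), f t with hC_def
  set M : ℝ := 2 + 2 * c + |C| + s ^ 2 * |Real.log s| with hM_def
  -- main estimate
  have key : ∀ k : ℝ, 0 < k → k < 1 →
      |(∫ t in Set.Ioi (k * s), f t) - s ^ 2 * Real.log (1 / k)| ≤ M := by
    intro k hk hk1
    set a : ℝ := k * s with ha_def
    have ha : 0 < a := mul_pos hk hs
    have ha1 : a < 1 := by
      calc a = k * s := rfl
        _ < 1 * 1 := by
            apply mul_lt_mul' hk1.le hs1 hs.le one_pos
        _ = 1 := mul_one 1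
    have hsplit : ∫ t in Set.Ioi a, f t
        = (∫ t in Set.Ioc a 1, f t) + ∫ t in Set.Ioi (1 : ℝ), f t := by
      rw [← Set.Ioc_union_Ioi_eq_Ioi ha1.le]
      exact setIntegral_union (Set.Ioc_disjoint_Ioi le_rfl) measurableSet_Ioi
        ((hint a ha).mono_set Set.Ioc_subset_Ioi_self) (hint 1 one_pos)
    have hfa : IntegrableOn f (Set.Ioc a 1) :=
      (hint a ha).mono_set Set.Ioc_subset_Ioi_self
    have hsub : (∫ t in Set.Ioc a 1, f t) - s ^ 2 * (-Real.log a)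
        = ∫ t in Set.Ioc a 1, (f t - s ^ 2 / t) := by
      rw [integral_sub hfa (hint2 a ha), hlog a ha ha1.le]
    have herr : |∫ t in Set.Ioc a 1, (f t - s ^ 2 / t)| ≤ 2 + 2 * c := by
      have hb := norm_setIntegral_le_of_norm_le_const
        (μ := volume) (s := Set.Ioc a 1) (C := 2 + 2 * c)
        (f := fun t => f t - s ^ 2 / t) measure_Ioc_lt_top
        (fun x hx => hdiff x ⟨lt_trans ha hx.1, hx.2⟩)
      rw [Real.norm_eq_abs] at hb
      refine hb.trans ?_
      rw [measureReal_def, Real.volume_Ioc, ENNReal.toReal_ofReal (by linarith)]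
      nlinarith
    have hloga : -Real.log a = Real.log (1 / k) - Real.log s := by
      rw [ha_def, Real.log_mul (ne_of_gt hk) (ne_of_gt hs), one_div, Real.log_inv]
      ring
    have hexpand : (∫ t in Set.Ioi a, f t) - s ^ 2 * Real.log (1 / k)
        = (∫ t in Set.Ioc a 1, (f t - s ^ 2 / t)) + C - s ^ 2 * Real.log s := by
      rw [hsplit, ← hsub, hloga]; ring
    rw [hexpand]
    calc |(∫ t in Set.Ioc a 1, (f t - s ^ 2 / t)) + C - s ^ 2 * Real.log s|
        ≤ |∫ t in Set.Ioc a 1, (f t - s ^ 2 / t)| + |C| + s ^ 2 * |Real.log s| := by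
          calc |(∫ t in Set.Ioc a 1, (f t - s ^ 2 / t)) + C - s ^ 2 * Real.log s|
              ≤ |(∫ t in Set.Ioc a 1, (f t - s ^ 2 / t)) + C| + |s ^ 2 * Real.log s| :=
                abs_sub _ _
            _ ≤ |∫ t in Set.Ioc a 1, (f t - s ^ 2 / t)| + |C| + s ^ 2 * |Real.log s| := by
                rw [abs_mul, abs_of_nonneg (sq_nonneg s)]
                gcongr
                exact abs_add_le _ _
      _ ≤ M := by rw [hM_def]; linarith
  -- conclude by squeezing
  rw [show (Real.sin θ ^ 2 : ℝ) = s ^ 2 from rfl, ← tendsto_sub_nhds_zero_iff]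
  have hMlim : Tendsto (fun k : ℝ => M / Real.log (1 / k)) (nhdsWithin 0 (Set.Ioi 0)) (nhds 0) := by
    apply Tendsto.div_atTop tendsto_const_nhds
    apply Real.tendsto_log_atTop.comp
    have h := tendsto_inv_nhdsGT_zero (𝕜 := ℝ)
    refine h.congr (fun x => ?_)
    rw [one_div]
  apply squeeze_zero_norm' ?_ hMlim
  filter_upwards [Ioo_mem_nhdsGT_of_mem (Set.mem_Ico.mpr ⟨le_refl (0 : ℝ), one_pos⟩)] with k hk
  obtain ⟨hk0, hk1⟩ := hk
  have hL : 0 < Real.log (1 / k) := Real.log_pos (one_lt_one_div hk0 hk1)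
  have hEq : 1 / Real.log (1 / k) * (∫ t in Set.Ioi (k * s), f t) - s ^ 2
      = ((∫ t in Set.Ioi (k * s), f t) - s ^ 2 * Real.log (1 / k)) / Real.log (1 / k) := by
    field_simp
  rw [Real.norm_eq_abs, hEq, abs_div, abs_of_pos hL, div_le_div_iff_of_pos_right hL]
  exact key k hk0 hk1
end

section
/- For every θ ∈ (0, π/2): lim_{k → 0⁺} (1 / ln(1/k)) ∫₁^{∞} ( e^{-2kρ cos θ} / ρ ) sin²(θ + kρ sin θ) dρ = sin² θ. -/
open MeasureTheory Real Filter Set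

lemma aux_exp_int (a : ℝ) {b : ℝ} (hb : 0 < b) :
    ∫ x in Set.Ioi a, Real.exp (-b * x) = Real.exp (-b * a) / b := by
  have hder : ∀ x ∈ Set.Ici a, HasDerivAt (fun x => -(Real.exp (-b * x) / b))
      (Real.exp (-b * x)) x := by
    intro x _
    have h1 : HasDerivAt (fun x : ℝ => -b * x) (-b) x := by
      simpa using (hasDerivAt_id x).const_mul (-b)
    have h2 := (h1.exp.div_const b).neg
    have e : Real.exp (-b * x) = -(Real.exp (-b * x) * -b / b) := by
      rw [mul_neg, neg_div, neg_neg, mul_div_assoc, div_self hb.ne', mul_one]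
    rw [e]; exact h2
  have htend : Tendsto (fun x => -(Real.exp (-b * x) / b)) atTop (nhds 0) := by
    have h3 : Tendsto (fun x : ℝ => -b * x) atTop atBot :=
      (tendsto_neg_atBot_iff.2 (tendsto_id.const_mul_atTop hb)).congr (fun x => by
        simp [id])
    have := ((Real.tendsto_exp_atBot.comp h3).div_const b).neg
    simpa using this
  have := integral_Ioi_of_hasDerivAt_of_tendsto' hder
    (exp_neg_integrableOn_Ioi a hb) htend
  rw [this]; ring

lemma aux_abs_sin_sub (x y : ℝ) : |Real.sin y - Real.sin x| ≤ |y - x| := by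
  rw [Real.sin_sub_sin]
  calc |2 * Real.sin ((y - x) / 2) * Real.cos ((y + x) / 2)|
      = 2 * |Real.sin ((y - x) / 2)| * |Real.cos ((y + x) / 2)| := by
        rw [abs_mul, abs_mul]; simp [abs_of_nonneg]
    _ ≤ 2 * |(y - x) / 2| * 1 := by
        apply mul_le_mul (by
          have := Real.abs_sin_le_abs (x := (y - x) / 2)
          nlinarith [abs_nonneg ((y-x)/2)]) (Real.abs_cos_le_one _) (abs_nonneg _) (by positivity)
    _ = |y - x| := by rw [abs_div]; simp; ring

lemma aux_sin_sq (x y : ℝ) : |Real.sin y ^ 2 - Real.sin x ^ 2| ≤ 2 * |y - x| := by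
  have h1 := aux_abs_sin_sub x y
  have h2 : |Real.sin y + Real.sin x| ≤ 2 :=
    (abs_add_le _ _).trans (by
      have a1 := Real.abs_sin_le_one y; have a2 := Real.abs_sin_le_one x; linarith)
  calc |Real.sin y ^ 2 - Real.sin x ^ 2|
      = |Real.sin y - Real.sin x| * |Real.sin y + Real.sin x| := by
        rw [← abs_mul]; congr 1; ring
    _ ≤ |y - x| * 2 := mul_le_mul h1 h2 (abs_nonneg _) (abs_nonneg _)
    _ = 2 * |y - x| := mul_comm _ _

lemma aux_key (θ : ℝ) (hθ0 : 0 < θ) (hθ2 : θ < π / 2) {k : ℝ} (hk0 : 0 < k) (hk1 : k < 1) :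
    |(∫ ρ in Set.Ioi (1 : ℝ),
        Real.exp (-2 * k * ρ * Real.cos θ) / ρ * Real.sin (θ + k * ρ * Real.sin θ) ^ 2)
      - Real.sin θ ^ 2 * Real.log (1 / k)|
      ≤ 2 / (2 * Real.cos θ) + (2 * Real.cos θ + 1 / (2 * Real.cos θ)) := by
  have hcos : 0 < Real.cos θ := Real.cos_pos_of_mem_Ioo ⟨by linarith [pi_pos], hθ2⟩
  set c : ℝ := 2 * Real.cos θ with hc_def
  have hc0 : 0 < c := by positivity
  have hck : 0 < c * k := by positivity
  have hs0 : 0 < Real.sin θ := Real.sin_pos_of_pos_of_lt_pi hθ0 (by linarith [pi_pos])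
  have hs1 : Real.sin θ ≤ 1 := Real.sin_le_one θ
  set s : ℝ := Real.sin θ with hs_def
  set b : ℝ := 1 / k with hb_def
  have hb1 : 1 < b := one_lt_one_div hk0 hk1
  have hkb : k * b = 1 := by rw [hb_def, mul_one_div, div_self (ne_of_gt hk0)]
  -- exponent rewriting
  have hexp_eq : ∀ ρ : ℝ, Real.exp (-2 * k * ρ * Real.cos θ) = Real.exp (-(c * k) * ρ) := by
    intro ρ; congr 1; rw [hc_def]; ring
  set f : ℝ → ℝ := fun ρ => Real.exp (-2 * k * ρ * Real.cos θ) / ρ *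
    Real.sin (θ + k * ρ * s) ^ 2 with hf_def
  set g : ℝ → ℝ := fun ρ => Real.exp (-(c * k) * ρ) / ρ with hg_def
  -- integrability
  have hexp_int : IntegrableOn (fun ρ => Real.exp (-(c * k) * ρ)) (Set.Ioi 1) :=
    exp_neg_integrableOn_Ioi 1 hck
  have hg_cont : ContinuousOn g (Set.Ioi (1:ℝ)) := by
    apply ContinuousOn.div (Continuous.continuousOn (by fun_prop)) continuousOn_id
    intro ρ hρ; exact ne_of_gt (lt_trans zero_lt_one hρ)
  have hg_bound : ∀ ρ : ℝ, ρ ∈ Set.Ioi (1:ℝ) → ‖g ρ‖ ≤ Real.exp (-(c * k) * ρ) := by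
    intro ρ hρ
    have hρ1 : (1:ℝ) < ρ := hρ
    rw [Real.norm_eq_abs, abs_of_nonneg (by positivity)]
    exact div_le_self (Real.exp_pos _).le (by linarith)
  have hg_int : IntegrableOn g (Set.Ioi 1) := by
    refine Integrable.mono hexp_int (hg_cont.aestronglyMeasurable measurableSet_Ioi) ?_
    filter_upwards [ae_restrict_mem measurableSet_Ioi] with ρ hρ
    rw [Real.norm_eq_abs (Real.exp _), abs_of_pos (Real.exp_pos _)]
    exact hg_bound ρ hρ
  have hf_cont : ContinuousOn f (Set.Ioi (1:ℝ)) := by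
    apply ContinuousOn.mul
    · apply ContinuousOn.div (Continuous.continuousOn (by fun_prop)) continuousOn_id
      intro ρ hρ; exact ne_of_gt (lt_trans zero_lt_one hρ)
    · exact Continuous.continuousOn (by fun_prop)
  have hf_int : IntegrableOn f (Set.Ioi 1) := by
    refine Integrable.mono hexp_int (hf_cont.aestronglyMeasurable measurableSet_Ioi) ?_
    filter_upwards [ae_restrict_mem measurableSet_Ioi] with ρ hρ
    have hρ1 : (1:ℝ) < ρ := hρ
    rw [Real.norm_eq_abs (Real.exp _), abs_of_pos (Real.exp_pos _), hf_def]
    simp only [hexp_eq]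
    rw [Real.norm_eq_abs, abs_mul, abs_of_nonneg (by positivity : (0:ℝ) ≤ Real.exp (-(c*k)*ρ)/ρ)]
    calc Real.exp (-(c*k)*ρ)/ρ * |Real.sin (θ + k*ρ*s) ^ 2|
        ≤ Real.exp (-(c*k)*ρ)/ρ * 1 := by
          apply mul_le_mul_of_nonneg_left _ (by positivity)
          rw [abs_of_nonneg (sq_nonneg _)]
          exact Real.sin_sq_le_one _
      _ ≤ Real.exp (-(c*k)*ρ) := by
          rw [mul_one]; exact div_le_self (Real.exp_pos _).le (by linarith)
  -- Step A
  have hA : |(∫ ρ in Set.Ioi (1:ℝ), f ρ) - s ^ 2 * ∫ ρ in Set.Ioi (1:ℝ), g ρ| ≤ 2 / c := by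
    rw [← integral_const_mul, ← integral_sub hf_int (hg_int.const_mul _)]
    have hdom : IntegrableOn (fun ρ => 2 * k * Real.exp (-(c*k)*ρ)) (Set.Ioi 1) :=
      hexp_int.const_mul _
    have hbd : ∀ᵐ ρ ∂(volume.restrict (Set.Ioi (1:ℝ))),
        ‖f ρ - s ^ 2 * g ρ‖ ≤ 2 * k * Real.exp (-(c*k)*ρ) := by
      filter_upwards [ae_restrict_mem measurableSet_Ioi] with ρ hρ
      have hρ1 : (1:ℝ) < ρ := hρ
      have hρ0 : (0:ℝ) < ρ := lt_trans zero_lt_one hρ1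
      have key : f ρ - s ^ 2 * g ρ =
          Real.exp (-(c*k)*ρ)/ρ * (Real.sin (θ + k*ρ*s) ^ 2 - Real.sin θ ^ 2) := by
        rw [hf_def, hg_def]; simp only [hexp_eq, hs_def]; ring
      rw [Real.norm_eq_abs, key, abs_mul,
        abs_of_nonneg (by positivity : (0:ℝ) ≤ Real.exp (-(c*k)*ρ)/ρ)]
      have h1 : |Real.sin (θ + k*ρ*s) ^ 2 - Real.sin θ ^ 2| ≤ 2 * (k * ρ * s) := by
        have h := aux_sin_sq θ (θ + k*ρ*s)
        rw [add_sub_cancel_left] at h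
        rwa [abs_of_nonneg (mul_nonneg (mul_nonneg hk0.le hρ0.le) hs0.le)] at h
      have h2 : Real.exp (-(c*k)*ρ)/ρ * (2*(k*ρ*s)) = 2*k*Real.exp (-(c*k)*ρ) * s := by
        field_simp
      calc Real.exp (-(c*k)*ρ)/ρ * |Real.sin (θ + k*ρ*s) ^ 2 - Real.sin θ ^ 2|
          ≤ Real.exp (-(c*k)*ρ)/ρ * (2 * (k * ρ * s)) :=
            mul_le_mul_of_nonneg_left h1 (by positivity)
        _ = 2*k*Real.exp (-(c*k)*ρ) * s := h2
        _ ≤ 2*k*Real.exp (-(c*k)*ρ) * 1 :=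
            mul_le_mul_of_nonneg_left hs1
              (mul_nonneg (mul_nonneg (by norm_num) hk0.le) (Real.exp_pos _).le)
        _ = 2 * k * Real.exp (-(c*k)*ρ) := mul_one _
    have := norm_integral_le_of_norm_le hdom hbd
    rw [Real.norm_eq_abs] at this
    refine this.trans ?_
    rw [integral_const_mul, aux_exp_int 1 hck]
    rw [show 2 * k * (Real.exp (-(c*k)*1) / (c*k)) = 2 / c * Real.exp (-(c*k)) by
      field_simp]
    calc 2 / c * Real.exp (-(c*k)) ≤ 2 / c * 1 := by
          apply mul_le_mul_of_nonneg_left _ (by positivity)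
          exact Real.exp_le_one_iff.2 (by linarith)
      _ = 2 / c := mul_one _
  -- Step B
  have hsplit : (∫ ρ in Set.Ioi (1:ℝ), g ρ) =
      (∫ ρ in Set.Ioc (1:ℝ) b, g ρ) + ∫ ρ in Set.Ioi b, g ρ := by
    rw [← setIntegral_union Set.Ioc_disjoint_Ioi_same measurableSet_Ioi
      (hg_int.mono_set Set.Ioc_subset_Ioi_self)
      (hg_int.mono_set (Set.Ioi_subset_Ioi hb1.le)),
      Set.Ioc_union_Ioi_eq_Ioi hb1.le]
  have hinv_int : IntegrableOn (fun ρ : ℝ => 1 / ρ) (Set.Ioc 1 b) := by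
    apply (ContinuousOn.integrableOn_Icc ?_).mono_set Set.Ioc_subset_Icc_self
    apply ContinuousOn.div continuousOn_const continuousOn_id
    intro ρ hρ; exact ne_of_gt (lt_of_lt_of_le zero_lt_one hρ.1)
  have hlog : (∫ ρ in Set.Ioc (1:ℝ) b, 1 / ρ) = Real.log b := by
    rw [← intervalIntegral.integral_of_le hb1.le, integral_one_div (by
      intro h
      rcases (Set.mem_uIcc.1 h) with ⟨h1, _⟩ | ⟨_, h2⟩ <;> linarith), div_one]
  have hB1 : |(∫ ρ in Set.Ioc (1:ℝ) b, g ρ) - Real.log b| ≤ c := by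
    rw [← hlog, ← integral_sub (hg_int.mono_set Set.Ioc_subset_Ioi_self) hinv_int]
    have hdom : IntegrableOn (fun _ : ℝ => c * k) (Set.Ioc 1 b) :=
      integrableOn_const measure_Ioc_lt_top.ne
    have hbd : ∀ᵐ ρ ∂(volume.restrict (Set.Ioc (1:ℝ) b)),
        ‖g ρ - 1 / ρ‖ ≤ c * k := by
      filter_upwards [ae_restrict_mem measurableSet_Ioc] with ρ hρ
      have hρ1 : (1:ℝ) < ρ := hρ.1
      have hρ0 : (0:ℝ) < ρ := lt_trans zero_lt_one hρ1
      have h1 : g ρ - 1 / ρ = (Real.exp (-(c*k)*ρ) - 1) / ρ := by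
        rw [hg_def]; ring
      rw [Real.norm_eq_abs, h1, abs_div, abs_of_pos hρ0]
      have h2 : |Real.exp (-(c*k)*ρ) - 1| ≤ c * k * ρ := by
        rw [abs_sub_comm, abs_of_nonneg (by
          have := Real.exp_le_one_iff.2 (by nlinarith : -(c*k)*ρ ≤ 0)
          linarith)]
        have h3 := Real.add_one_le_exp (-(c*k)*ρ)
        linarith
      rw [div_le_iff₀ hρ0]
      calc |Real.exp (-(c*k)*ρ) - 1| ≤ c * k * ρ := h2
        _ = c * k * ρ := rfl
    have := norm_integral_le_of_norm_le hdom hbd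
    rw [Real.norm_eq_abs] at this
    refine this.trans ?_
    rw [setIntegral_const, smul_eq_mul, Real.volume_real_Ioc_of_le hb1.le]
    nlinarith
  have hB2 : |∫ ρ in Set.Ioi b, g ρ| ≤ 1 / c := by
    have hdom : IntegrableOn (fun ρ => k * Real.exp (-(c*k)*ρ)) (Set.Ioi b) :=
      (exp_neg_integrableOn_Ioi b hck).const_mul _
    have hbd : ∀ᵐ ρ ∂(volume.restrict (Set.Ioi b)),
        ‖g ρ‖ ≤ k * Real.exp (-(c*k)*ρ) := by
      filter_upwards [ae_restrict_mem measurableSet_Ioi] with ρ hρ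
      have hρb : b < ρ := hρ
      have hρ0 : (0:ℝ) < ρ := lt_trans (by positivity) hρb
      rw [Real.norm_eq_abs, hg_def, abs_of_nonneg (by positivity)]
      rw [div_le_iff₀ hρ0, show k * Real.exp (-(c*k)*ρ) * ρ = Real.exp (-(c*k)*ρ) * (k * ρ) by ring]
      apply le_mul_of_one_le_right (Real.exp_pos _).le
      calc (1:ℝ) = k * b := hkb.symm
        _ ≤ k * ρ := mul_le_mul_of_nonneg_left hρb.le hk0.le
    have := norm_integral_le_of_norm_le hdom hbd
    rw [Real.norm_eq_abs] at this
    refine this.trans ?_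
    rw [integral_const_mul, aux_exp_int b hck]
    have heq : -(c*k)*b = -c := by rw [neg_mul, mul_assoc, hkb, mul_one]
    rw [heq,
      show k * (Real.exp (-c) / (c*k)) = Real.exp (-c) / c * (k / k) by ring,
      div_self (ne_of_gt hk0), mul_one]
    gcongr
    exact Real.exp_le_one_iff.2 (by linarith)
  -- combine B
  have hBnet : |(∫ ρ in Set.Ioi (1:ℝ), g ρ) - Real.log b| ≤ c + 1 / c := by
    rw [hsplit, show ((∫ ρ in Set.Ioc (1:ℝ) b, g ρ) + ∫ ρ in Set.Ioi b, g ρ) - Real.log b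
      = ((∫ ρ in Set.Ioc (1:ℝ) b, g ρ) - Real.log b) + ∫ ρ in Set.Ioi b, g ρ from by ring]
    exact (abs_add_le _ _).trans (add_le_add hB1 hB2)
  -- final combination
  have hgoal : |(∫ ρ in Set.Ioi (1:ℝ), f ρ) - s ^ 2 * Real.log b|
      ≤ 2 / c + (c + 1 / c) := by
    rw [show (∫ ρ in Set.Ioi (1:ℝ), f ρ) - s ^ 2 * Real.log b
      = ((∫ ρ in Set.Ioi (1:ℝ), f ρ) - s ^ 2 * ∫ ρ in Set.Ioi (1:ℝ), g ρ)
        + s ^ 2 * ((∫ ρ in Set.Ioi (1:ℝ), g ρ) - Real.log b) from by ring]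
    refine (abs_add_le _ _).trans (add_le_add hA ?_)
    rw [abs_mul, abs_of_nonneg (sq_nonneg s)]
    calc s ^ 2 * |(∫ ρ in Set.Ioi (1:ℝ), g ρ) - Real.log b|
        ≤ 1 * (c + 1 / c) := by
          apply mul_le_mul _ hBnet (abs_nonneg _) one_pos.le
          nlinarith
      _ = c + 1 / c := one_mul _
  exact hgoal

theorem stmt_13 (θ : ℝ) (hθ : θ ∈ Set.Ioo 0 (π / 2)) :
    Tendsto (fun k : ℝ =>
        (1 / Real.log (1 / k)) *
          ∫ ρ in Set.Ioi (1 : ℝ),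
            Real.exp (-2 * k * ρ * Real.cos θ) / ρ * Real.sin (θ + k * ρ * Real.sin θ) ^ 2)
      (nhdsWithin 0 (Set.Ioi 0)) (nhds (Real.sin θ ^ 2)) := by
  obtain ⟨hθ0, hθ2⟩ := hθ
  have hcos : 0 < Real.cos θ := Real.cos_pos_of_mem_Ioo ⟨by linarith [pi_pos], hθ2⟩
  set M : ℝ := 2 / (2 * Real.cos θ) + (2 * Real.cos θ + 1 / (2 * Real.cos θ)) with hM_def
  have hlog : Tendsto (fun k : ℝ => Real.log (1 / k)) (nhdsWithin 0 (Set.Ioi 0)) atTop := by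
    have h1 : Tendsto Real.log (nhdsWithin 0 (Set.Ioi 0)) atBot :=
      Real.tendsto_log_nhdsGT_zero
    have h2 := (tendsto_neg_atBot_atTop).comp h1
    apply h2.congr
    intro k
    simp [Function.comp, one_div, Real.log_inv]
  have hlim : Tendsto (fun k : ℝ => M / Real.log (1 / k))
      (nhdsWithin 0 (Set.Ioi 0)) (nhds 0) :=
    Tendsto.div_atTop tendsto_const_nhds hlog
  rw [← tendsto_sub_nhds_zero_iff]
  apply squeeze_zero_norm' ?_ hlim
  filter_upwards [Ioo_mem_nhdsGT_of_mem (by norm_num : (0:ℝ) ∈ Set.Ico (0:ℝ) 1)]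
    with k hk
  obtain ⟨hk0, hk1⟩ := hk
  have hL : 0 < Real.log (1 / k) := Real.log_pos (one_lt_one_div hk0 hk1)
  have h := aux_key θ hθ0 hθ2 hk0 hk1
  set F : ℝ := ∫ ρ in Set.Ioi (1 : ℝ),
    Real.exp (-2 * k * ρ * Real.cos θ) / ρ * Real.sin (θ + k * ρ * Real.sin θ) ^ 2 with hF_def
  rw [Real.norm_eq_abs,
    show 1 / Real.log (1 / k) * F - Real.sin θ ^ 2
      = (F - Real.sin θ ^ 2 * Real.log (1 / k)) / Real.log (1 / k) from by
        field_simp,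
    abs_div, abs_of_pos hL]
  gcongr
end

section
/- Let x, y ∈ ℝ³ be nonzero and let k ∈ (0,1). Then (√2/(4π)) · (2π)^{-3/2} ∫_{ℝ³} e^{i p·y} χ_{[k,1]}(|p|) e^{-|p| |x|} / (|x| |p|) dp = (1 / (2 π^{3/2})) · (1 / (|x| |y| (|x|² + |y|²))) · { e^{-|x|} ( -|x| sin|y| - |y| cos|y| ) - e^{-k|x|} ( -|x| sin(k|y|) - |y| cos(k|y|) ) }. -/
open MeasureTheory Real Complex Set intervalIntegral

private lemma stmt14_L1 (a b k : ℝ) (hab : a^2 + b^2 ≠ 0) :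
    ∫ u in k..1, Real.exp (-a*u) * Real.sin (b*u)
    = (Real.exp (-a) * (-a * Real.sin b - b * Real.cos b)
      - Real.exp (-a*k) * (-a * Real.sin (b*k) - b * Real.cos (b*k))) / (a^2+b^2) := by
  have h : ∀ u : ℝ, HasDerivAt (fun u => Real.exp (-a*u) * (-a * Real.sin (b*u) - b * Real.cos (b*u)) / (a^2+b^2))
      (Real.exp (-a*u) * Real.sin (b*u)) u := by
    intro u
    have h1 : HasDerivAt (fun u : ℝ => Real.exp (-a*u)) (Real.exp (-a*u) * (-a)) u := by
      have := (Real.hasDerivAt_exp (-a*u)).comp u ((hasDerivAt_id u).const_mul (-a))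
      simpa [Function.comp_def] using this
    have h2 : HasDerivAt (fun u : ℝ => Real.sin (b*u)) (Real.cos (b*u) * b) u := by
      have := (Real.hasDerivAt_sin (b*u)).comp u ((hasDerivAt_id u).const_mul b)
      simpa [Function.comp_def] using this
    have h3 : HasDerivAt (fun u : ℝ => Real.cos (b*u)) (-Real.sin (b*u) * b) u := by
      have := (Real.hasDerivAt_cos (b*u)).comp u ((hasDerivAt_id u).const_mul b)
      simpa [Function.comp_def] using this
    have := ((h1.mul ((h2.const_mul (-a)).sub (h3.const_mul b))).div_const (a^2+b^2))
    refine this.congr_deriv ?_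
    simp only [Pi.sub_apply]
    rw [div_eq_iff hab]
    ring
  rw [intervalIntegral.integral_eq_sub_of_hasDerivAt (fun u _ => h u)]
  · field_simp
  · apply Continuous.intervalIntegrable
    continuity

private lemma stmt14_L2 (b u : ℝ) (hb : b ≠ 0) (hu : 0 < u) :
    ∫ t in Set.Ioo (-u) u, Complex.exp (Complex.I * ((b*t : ℝ) : ℂ))
    = ((2 * Real.sin (b*u) / b : ℝ) : ℂ) := by
  have h0 : ∫ t in Set.Ioo (-u) u, Complex.exp (Complex.I * ((b*t : ℝ) : ℂ))
      = ∫ t in (-u)..u, Complex.exp ((Complex.I * b) * t) := by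
    rw [intervalIntegral.integral_of_le (by linarith), ← MeasureTheory.integral_Ioc_eq_integral_Ioo]
    congr 1
    funext t
    push_cast
    ring_nf
  rw [h0, integral_exp_mul_complex (by simp [hb, Complex.I_ne_zero, Complex.ext_iff])]
  have e1 : Complex.I * b * u = (b*u : ℝ) * Complex.I := by push_cast; ring
  have e2 : Complex.I * b * (-u : ℝ) = (-(b*u) : ℝ) * Complex.I := by push_cast; ring
  rw [e1, e2, Complex.exp_mul_I, Complex.exp_mul_I]
  push_cast
  rw [Complex.cos_neg, Complex.sin_neg]
  have hbne : (b : ℂ) ≠ 0 := by exact_mod_cast hb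
  field_simp
  ring

private lemma stmt14_L4 (t : ℝ) (g : ℝ → ℝ) :
    ∫ s in Ioi (0:ℝ), s * g (Real.sqrt (t^2+s^2)) = ∫ u in Ioi |t|, u * g u := by
  have hpos : ∀ s : ℝ, s ∈ Ioi (0:ℝ) → 0 < t^2 + s^2 := by
    intro s hs; have : (0:ℝ) < s := hs; positivity
  have hd : ∀ s ∈ Ioi (0:ℝ), HasDerivWithinAt (fun s => Real.sqrt (t^2+s^2))
      (s / Real.sqrt (t^2+s^2)) (Ioi 0) s := by
    intro s hs
    have h1 : HasDerivAt (fun s : ℝ => t^2+s^2) (2*s) s := by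
      simpa using ((hasDerivAt_pow 2 s).const_add (t^2))
    have := (Real.hasDerivAt_sqrt (hpos s hs).ne').comp s h1
    have h2 : 1 / (2 * Real.sqrt (t^2+s^2)) * (2*s) = s / Real.sqrt (t^2+s^2) := by
      have : Real.sqrt (t^2+s^2) ≠ 0 := (Real.sqrt_pos.2 (hpos s hs)).ne'
      field_simp
    rw [h2] at this
    exact this.hasDerivWithinAt
  have hinj : InjOn (fun s => Real.sqrt (t^2+s^2)) (Ioi 0) := by
    intro s1 h1 s2 h2 he
    simp only at he
    have hss : t^2+s1^2 = t^2+s2^2 :=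
      (Real.sqrt_inj (hpos s1 h1).le (hpos s2 h2).le).mp he
    have habs : |s1| = |s2| := by
      rw [← Real.sqrt_sq_eq_abs, ← Real.sqrt_sq_eq_abs]
      congr 1; linarith
    rwa [abs_of_pos h1, abs_of_pos h2] at habs
  have himg : (fun s => Real.sqrt (t^2+s^2)) '' (Ioi 0) = Ioi |t| := by
    ext u
    simp only [mem_image, mem_Ioi]
    constructor
    · rintro ⟨s, hs, rfl⟩
      calc |t| = Real.sqrt (t^2) := (Real.sqrt_sq_eq_abs t).symm
        _ < Real.sqrt (t^2+s^2) := Real.sqrt_lt_sqrt (sq_nonneg t) (by nlinarith)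
    · intro hu
      have hu0 : 0 < u := lt_of_le_of_lt (abs_nonneg t) hu
      have ht2 : t^2 < u^2 := by
        have := abs_nonneg t
        nlinarith [_root_.sq_abs t]
      refine ⟨Real.sqrt (u^2 - t^2), Real.sqrt_pos.2 (by linarith), ?_⟩
      rw [Real.sq_sqrt (by linarith : (0:ℝ) ≤ u^2 - t^2)]
      rw [show t^2 + (u^2 - t^2) = u^2 by ring, Real.sqrt_sq hu0.le]
  have := integral_image_eq_integral_abs_deriv_smul measurableSet_Ioi hd hinj (fun u => u * g u)
  rw [himg] at this
  rw [this]
  apply setIntegral_congr_fun measurableSet_Ioi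
  intro s hs
  have h0 : (0:ℝ) < s := hs
  have hsq : Real.sqrt (t^2+s^2) ≠ 0 := (Real.sqrt_pos.2 (hpos s hs)).ne'
  simp only [smul_eq_mul]
  rw [abs_of_pos (div_pos h0 (Real.sqrt_pos.2 (hpos s hs)))]
  field_simp

private lemma stmt14_L3 (g : ℝ → ℝ) (t : ℝ) :
    ∫ w : Fin 2 → ℝ, g (Real.sqrt (t^2 + ((w 0)^2 + (w 1)^2)))
    = (2*π) * ∫ s in Ioi (0:ℝ), s * g (Real.sqrt (t^2+s^2)) := by
  have h1 : ∫ w : Fin 2 → ℝ, g (Real.sqrt (t^2 + ((w 0)^2 + (w 1)^2)))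
      = ∫ v : EuclideanSpace ℝ (Fin 2), (fun r => g (Real.sqrt (t^2 + r^2))) ‖v‖ := by
    rw [← (EuclideanSpace.volume_preserving_symm_measurableEquiv_toLp (Fin 2)).integral_comp'
      (fun w => g (Real.sqrt (t^2 + ((w 0)^2 + (w 1)^2))))]
    congr 1
    ext v
    have hnorm : ‖v‖ = Real.sqrt ((v 0)^2 + (v 1)^2) := by
      rw [EuclideanSpace.norm_eq, Fin.sum_univ_two]
      norm_num [sq_abs]
    have : ((MeasurableEquiv.toLp 2 (Fin 2 → ℝ)).symm) v = (v : Fin 2 → ℝ) := rfl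
    rw [this]
    simp only
    rw [hnorm, Real.sq_sqrt (by positivity)]
  rw [h1, integral_fun_norm_addHaar volume (fun r => g (Real.sqrt (t^2 + r^2)))]
  have hdim : Module.finrank ℝ (EuclideanSpace ℝ (Fin 2)) = 2 := finrank_euclideanSpace_fin
  rw [hdim]
  have hball : volume.real (Metric.ball (0 : EuclideanSpace ℝ (Fin 2)) 1) = π := by
    rw [measureReal_def, EuclideanSpace.volume_ball]
    rw [Fintype.card_fin]
    norm_num [Real.Gamma_two]
    exact Real.sq_sqrt Real.pi_nonneg
  rw [hball]
  simp only [nsmul_eq_mul, smul_eq_mul, Nat.cast_ofNat, pow_one]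
  have h2 : (2*π) * ∫ s in Ioi (0:ℝ), s * g (Real.sqrt (t^2+s^2))
      = ∫ s in Ioi (0:ℝ), 2*(π*(s^(2-1) * g (Real.sqrt (t^2+s^2)))) := by
    rw [← MeasureTheory.integral_const_mul]
    apply setIntegral_congr_fun measurableSet_Ioi
    intro s _
    norm_num
    ring
  rw [h2]
  rw [MeasureTheory.integral_const_mul, MeasureTheory.integral_const_mul]

private lemma stmt14_exists_phi (y : EuclideanSpace ℝ (Fin 3)) (hy : y ≠ 0) :
    ∃ Φ : ℝ × (Fin 2 → ℝ) → EuclideanSpace ℝ (Fin 3),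
      MeasurePreserving Φ volume volume ∧ MeasurableEmbedding Φ ∧
      ∀ z : ℝ × (Fin 2 → ℝ), (inner ℝ (Φ z) y : ℝ) = ‖y‖ * z.1 ∧
        ‖Φ z‖ = Real.sqrt (z.1^2 + ((z.2 0)^2 + (z.2 1)^2)) := by
  have hy' : ‖y‖ ≠ 0 := norm_ne_zero_iff.2 hy
  -- orthonormal basis with B 0 = ‖y‖⁻¹ • y
  have hcard : Module.finrank ℝ (EuclideanSpace ℝ (Fin 3)) = Fintype.card (Fin 3) := by
    simp [finrank_euclideanSpace_fin]
  have horth : Orthonormal ℝ (({0} : Set (Fin 3)).restrict (fun _ => ‖y‖⁻¹ • y)) := by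
    constructor
    · intro i
      show ‖‖y‖⁻¹ • y‖ = 1
      rw [norm_smul, norm_inv, norm_norm, inv_mul_cancel₀ hy']
    · intro i j hij
      exfalso
      apply hij
      have hi := i.2
      have hj := j.2
      simp only [Set.mem_singleton_iff] at hi hj
      exact Subtype.ext (hi.trans hj.symm)
  obtain ⟨B, hB⟩ := horth.exists_orthonormalBasis_extension_of_card_eq hcard
  have hB0 : B 0 = ‖y‖⁻¹ • y := hB 0 rfl
  set e3 := (MeasurableEquiv.toLp 2 (Fin 3 → ℝ)).symm with he3
  set e2 := MeasurableEquiv.piFinSuccAbove (fun _ : Fin 3 => ℝ) 0 with he2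
  refine ⟨fun z => B.repr.symm (e3.symm (e2.symm z)), ?_, ?_, ?_⟩
  · exact B.measurePreserving_repr_symm.comp
      (((EuclideanSpace.volume_preserving_symm_measurableEquiv_toLp (Fin 3)).symm).comp
        (volume_preserving_piFinSuccAbove (fun _ : Fin 3 => ℝ) 0).symm)
  · exact (B.repr.symm.toHomeomorph.measurableEmbedding).comp
      ((e3.symm.measurableEmbedding).comp (e2.symm.measurableEmbedding))
  · intro z
    set v : Fin 3 → ℝ := e2.symm z with hv
    have hvc : v = Fin.insertNth 0 z.1 z.2 := rfl
    have hv0 : v 0 = z.1 := by rw [hvc]; exact Fin.insertNth_apply_same (α := fun _ : Fin 3 => ℝ) 0 z.1 z.2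
    have hv1 : v 1 = z.2 0 := by
      rw [hvc]
      exact Fin.insertNth_apply_succAbove (α := fun _ : Fin 3 => ℝ) 0 z.1 z.2 0
    have hv2 : v 2 = z.2 1 := by
      rw [hvc]
      exact Fin.insertNth_apply_succAbove (α := fun _ : Fin 3 => ℝ) 0 z.1 z.2 1
    have hq : ∀ i, (e3.symm v) i = v i := fun i => rfl
    constructor
    · have hyeq : (‖y‖ : ℝ) • B 0 = y := by
        rw [hB0, smul_smul, mul_inv_cancel₀ hy', one_smul]
      calc (inner ℝ (B.repr.symm (e3.symm v)) y : ℝ)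
          = inner ℝ (B.repr.symm (e3.symm v)) (‖y‖ • B 0) := by rw [hyeq]
        _ = ‖y‖ * inner ℝ (B.repr.symm (e3.symm v)) (B 0) := real_inner_smul_right _ _ _
        _ = ‖y‖ * inner ℝ (B 0) (B.repr.symm (e3.symm v)) := by rw [real_inner_comm]
        _ = ‖y‖ * (B.repr (B.repr.symm (e3.symm v)) 0) := by rw [B.repr_apply_apply]
        _ = ‖y‖ * (e3.symm v) 0 := by rw [LinearIsometryEquiv.apply_symm_apply]
        _ = ‖y‖ * z.1 := by rw [hq 0, hv0]
    · rw [LinearIsometryEquiv.norm_map, EuclideanSpace.norm_eq]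
      congr 1
      rw [Fin.sum_univ_three]
      simp only [← hv, hq, hv0, hv1, hv2, Real.norm_eq_abs, _root_.sq_abs]
      ring
theorem stmt_14 (x y : EuclideanSpace ℝ (Fin 3)) (hx : x ≠ 0) (hy : y ≠ 0)
    (k : ℝ) (hk : k ∈ Set.Ioo (0 : ℝ) 1) :
    ((Real.sqrt 2 / (4 * π) * (2 * π) ^ (-(3 : ℝ) / 2) : ℝ) : ℂ) *
      ∫ p : EuclideanSpace ℝ (Fin 3),
        Complex.exp (Complex.I * ((inner ℝ p y : ℝ) : ℂ)) *
          ((Set.indicator (Set.Icc k 1) (fun _ => (1 : ℝ)) ‖p‖ *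
              Real.exp (-‖p‖ * ‖x‖) / (‖x‖ * ‖p‖) : ℝ) : ℂ)
    = (((1 / (2 * π ^ (3 / 2 : ℝ))) * (1 / (‖x‖ * ‖y‖ * (‖x‖ ^ 2 + ‖y‖ ^ 2))) *
        (Real.exp (-‖x‖) * (-‖x‖ * Real.sin ‖y‖ - ‖y‖ * Real.cos ‖y‖) -
         Real.exp (-k * ‖x‖) *
           (-‖x‖ * Real.sin (k * ‖y‖) - ‖y‖ * Real.cos (k * ‖y‖))) : ℝ) : ℂ) := by
  obtain ⟨hk0, hk1⟩ := hk
  set a := ‖x‖ with hadef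
  set b := ‖y‖ with hbdef
  have ha : 0 < a := norm_pos_iff.2 hx
  have hb : 0 < b := norm_pos_iff.2 hy
  set g : ℝ → ℝ := fun u => Set.indicator (Set.Icc k 1) (fun _ => (1:ℝ)) u * Real.exp (-u*a) / (a*u) with hgdef
  set r : ℝ → ℝ := fun u => Set.indicator (Set.Icc k 1) (fun _ => (1:ℝ)) u * Real.exp (-u*a) with hrdef
  set F : EuclideanSpace ℝ (Fin 3) → ℂ := fun p =>
    Complex.exp (Complex.I * ((inner ℝ p y : ℝ) : ℂ)) * ((g ‖p‖ : ℝ) : ℂ) with hFdef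
  have hgoal_lhs : (∫ p : EuclideanSpace ℝ (Fin 3),
      Complex.exp (Complex.I * ((inner ℝ p y : ℝ) : ℂ)) *
        ((Set.indicator (Set.Icc k 1) (fun _ => (1 : ℝ)) ‖p‖ *
            Real.exp (-‖p‖ * a) / (a * ‖p‖) : ℝ) : ℂ)) = ∫ p, F p := rfl
  rw [hgoal_lhs]
  -- measurability of g
  have hg_meas : Measurable g := by
    apply Measurable.div
    · exact (measurable_const.indicator measurableSet_Icc).mul
        (Real.measurable_exp.comp (measurable_id.neg.mul_const a))
    · exact measurable_const.mul measurable_id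
  -- integrability of F
  have hFi : Integrable F volume := by
    have hFm : AEStronglyMeasurable F volume := by
      apply Measurable.aestronglyMeasurable
      apply Measurable.mul
      · apply Measurable.cexp
        apply Measurable.const_mul
        exact Complex.measurable_ofReal.comp
          (Continuous.measurable (Continuous.inner continuous_id continuous_const))
      · exact Complex.measurable_ofReal.comp (hg_meas.comp measurable_norm)
    have hbi : Integrable ((Metric.closedBall (0 : EuclideanSpace ℝ (Fin 3)) 1).indicator
        (fun _ => (a*k)⁻¹)) volume := by
      rw [integrable_indicator_iff measurableSet_closedBall]
      exact integrableOn_const measure_closedBall_lt_top.ne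
    apply Integrable.mono' hbi hFm
    filter_upwards with p
    have hnorm : ‖F p‖ = |g ‖p‖| := by
      rw [hFdef]
      simp only
      rw [norm_mul]
      have : Complex.I * ((inner ℝ p y : ℝ) : ℂ) = ((inner ℝ p y : ℝ) : ℂ) * Complex.I := mul_comm _ _
      rw [this, Complex.norm_exp_ofReal_mul_I, one_mul, Complex.norm_real, Real.norm_eq_abs]
    rw [hnorm]
    by_cases h : ‖p‖ ∈ Set.Icc k 1
    · have hmem : p ∈ Metric.closedBall (0 : EuclideanSpace ℝ (Fin 3)) 1 := by
        rw [Metric.mem_closedBall, dist_zero_right]; exact h.2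
      rw [Set.indicator_of_mem hmem]
      have hgp : g ‖p‖ = Real.exp (-‖p‖*a) / (a*‖p‖) := by
        simp only [hgdef, Set.indicator_of_mem h, one_mul]
      rw [hgp]
      rw [_root_.abs_of_nonneg (show (0:ℝ) ≤ Real.exp (-‖p‖*a)/(a*‖p‖) by positivity)]
      rw [inv_eq_one_div]
      apply div_le_div₀ (by norm_num) _ (by positivity) _
      · exact Real.exp_le_one_iff.2 (by nlinarith [h.1])
      · nlinarith [h.1]
    · have hgp : g ‖p‖ = 0 := by
        simp only [hgdef, Set.indicator_of_notMem h, zero_mul, zero_div]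
      rw [hgp, abs_zero]
      exact Set.indicator_nonneg (fun _ _ => by positivity) p
  -- transfer to ℝ × (Fin 2 → ℝ)
  obtain ⟨Φ, hΦmp, hΦemb, hΦ⟩ := stmt14_exists_phi y hy
  set G : ℝ × (Fin 2 → ℝ) → ℂ := fun z =>
    Complex.exp (Complex.I * ((b * z.1 : ℝ) : ℂ)) *
      ((g (Real.sqrt (z.1^2 + ((z.2 0)^2 + (z.2 1)^2))) : ℝ) : ℂ) with hGdef
  have hFG : F ∘ Φ = G := by
    funext z
    simp only [Function.comp_apply, hFdef, hGdef, (hΦ z).1, (hΦ z).2, ← hbdef]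
  have hstep1 : ∫ p, F p = ∫ z, G z := by
    rw [← hΦmp.integral_comp hΦemb F]
    exact congrArg _ hFG
  have hGi : Integrable G volume := by
    rw [← hFG]
    exact (hΦmp.integrable_comp_emb hΦemb).2 hFi
  have hprod : (volume : Measure (ℝ × (Fin 2 → ℝ))) = (volume : Measure ℝ).prod volume :=
    MeasureTheory.Measure.volume_eq_prod _ _
  have hstep2 : ∫ z, G z = ∫ t : ℝ, ∫ w : Fin 2 → ℝ, G (t, w) := by
    rw [hprod]
    rw [hprod] at hGi
    exact MeasureTheory.integral_prod G hGi
  -- the inner integral over w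
  have hinner : ∀ t : ℝ, (∫ w : Fin 2 → ℝ, G (t, w))
      = Complex.exp (Complex.I * ((b * t : ℝ) : ℂ)) *
        ((2*π/a * ∫ u in Set.Ioi |t|, r u : ℝ) : ℂ) := by
    intro t
    simp only [hGdef]
    rw [MeasureTheory.integral_const_mul]
    congr 1
    have hug : ∫ u in Set.Ioi |t|, u * g u = ∫ u in Set.Ioi |t|, r u / a := by
      apply setIntegral_congr_fun measurableSet_Ioi
      intro u hu
      have hu0 : (0:ℝ) < u := lt_of_le_of_lt (abs_nonneg t) hu
      simp only [hgdef, hrdef]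
      field_simp
    have hreal : ∫ w : Fin 2 → ℝ, g (Real.sqrt (t^2+((w 0)^2+(w 1)^2)))
        = 2*π/a * ∫ u in Set.Ioi |t|, r u := by
      rw [stmt14_L3 g t, stmt14_L4 t g, hug, MeasureTheory.integral_div]
      ring
    rw [← hreal]
    exact _root_.integral_ofReal
    -- Fubini on ℝ × ℝ
  set S : Set (ℝ×ℝ) := {z : ℝ×ℝ | -z.2 < z.1 ∧ z.1 < z.2 ∧ k ≤ z.2 ∧ z.2 ≤ 1} with hSdef
  have hSm : MeasurableSet S := by
    have hdec : S = {z : ℝ×ℝ | -z.2 < z.1} ∩ ({z : ℝ×ℝ | z.1 < z.2} ∩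
        ({z : ℝ×ℝ | k ≤ z.2} ∩ {z : ℝ×ℝ | z.2 ≤ 1})) := by
      ext z
      simp only [hSdef, Set.mem_setOf_eq, Set.mem_inter_iff]
    rw [hdec]
    exact (measurableSet_lt measurable_snd.neg measurable_fst).inter
      ((measurableSet_lt measurable_fst measurable_snd).inter
        ((measurableSet_le measurable_const measurable_snd).inter
          (measurableSet_le measurable_snd measurable_const)))
  set φ : ℝ×ℝ → ℂ := S.indicator (fun z => ((Real.exp (-z.2*a) : ℝ):ℂ) *
    Complex.exp (Complex.I * ((b*z.1 : ℝ):ℂ))) with hφdef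
  have hprodR : (volume : Measure (ℝ×ℝ)) = (volume : Measure ℝ).prod volume :=
    MeasureTheory.Measure.volume_eq_prod _ _
  have hφi : Integrable φ ((volume : Measure ℝ).prod volume) := by
    rw [← hprodR]
    have hφm : AEStronglyMeasurable φ volume := by
      apply Measurable.aestronglyMeasurable
      apply Measurable.indicator _ hSm
      apply Measurable.mul
      · exact Complex.measurable_ofReal.comp (Real.measurable_exp.comp (measurable_snd.neg.mul_const a))
      · exact Measurable.cexp (Measurable.const_mul (Complex.measurable_ofReal.comp (measurable_fst.const_mul b)) _)
    have hbnd : Integrable ((Set.Icc (-1:ℝ) 1 ×ˢ Set.Icc k 1).indicator (fun _ => (1:ℝ))) volume := by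
      rw [integrable_indicator_iff (measurableSet_Icc.prod measurableSet_Icc)]
      exact integrableOn_const ((isCompact_Icc.prod isCompact_Icc).measure_lt_top.ne)
    apply Integrable.mono' hbnd hφm
    filter_upwards with z
    by_cases hz : z ∈ S
    · rw [hφdef, Set.indicator_of_mem hz]
      simp only [hSdef, Set.mem_setOf_eq] at hz
      obtain ⟨h2,h3,h4,h5⟩ := hz
      have h1 : ‖((Real.exp (-z.2*a) : ℝ):ℂ) * Complex.exp (Complex.I * ((b*z.1:ℝ):ℂ))‖
          = Real.exp (-z.2*a) := by
        rw [norm_mul, mul_comm Complex.I, Complex.norm_exp_ofReal_mul_I, mul_one,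
          Complex.norm_real, Real.norm_eq_abs, _root_.abs_of_pos (Real.exp_pos _)]
      rw [h1]
      have hmem : z ∈ Set.Icc (-1:ℝ) 1 ×ˢ Set.Icc k 1 :=
        ⟨⟨by linarith, by linarith⟩, ⟨h4, h5⟩⟩
      rw [Set.indicator_of_mem hmem]
      exact Real.exp_le_one_iff.2 (by nlinarith)
    · rw [hφdef, Set.indicator_of_notMem hz, norm_zero]
      exact Set.indicator_nonneg (fun _ _ => zero_le_one) z
  have hP1 : ∀ t : ℝ, Complex.exp (Complex.I * ((b*t:ℝ):ℂ)) * ((∫ u in Set.Ioi |t|, r u : ℝ):ℂ)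
      = ∫ u : ℝ, φ (t, u) := by
    intro t
    have hpt : (fun u => φ (t,u)) = (Set.Ioi |t| ∩ Set.Icc k 1).indicator
        (fun u => ((Real.exp (-u*a) : ℝ):ℂ) * Complex.exp (Complex.I * ((b*t:ℝ):ℂ))) := by
      funext u
      by_cases h : u ∈ Set.Ioi |t| ∩ Set.Icc k 1
      · have hzS : (t,u) ∈ S := by
          obtain ⟨h1, h2⟩ := h
          have habs := abs_lt.1 (show |t| < u from h1)
          exact ⟨habs.1, habs.2, h2.1, h2.2⟩
        rw [Set.indicator_of_mem h, hφdef, Set.indicator_of_mem hzS]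
      · have hzS : (t,u) ∉ S := by
          intro hzS
          apply h
          obtain ⟨h1,h2,h3,h4⟩ := hzS
          exact ⟨abs_lt.2 ⟨h1, h2⟩, h3, h4⟩
        rw [Set.indicator_of_notMem h, hφdef, Set.indicator_of_notMem hzS]
    rw [hpt, MeasureTheory.integral_indicator (measurableSet_Ioi.inter measurableSet_Icc),
      MeasureTheory.integral_mul_const, mul_comm]
    congr 1
    have hr2 : ∫ u in Set.Ioi |t|, r u = ∫ u in Set.Ioi |t| ∩ Set.Icc k 1, Real.exp (-u*a) := by
      have hre : ∀ u ∈ Set.Ioi |t|, r u = (Set.Icc k 1).indicator (fun u => Real.exp (-u*a)) u := by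
        intro u _
        by_cases h : u ∈ Set.Icc k 1
        · rw [hrdef]; simp only [Set.indicator_of_mem h, one_mul]
        · rw [hrdef]; simp only [Set.indicator_of_notMem h, zero_mul]
      rw [setIntegral_congr_fun measurableSet_Ioi hre,
        setIntegral_indicator measurableSet_Icc]
    rw [hr2]
    exact _root_.integral_ofReal.symm
  have hP2 : ∀ u : ℝ, (∫ t : ℝ, φ (t, u))
      = (((Set.Icc k 1).indicator (fun u => Real.exp (-u*a) * (2*Real.sin (b*u)/b)) u : ℝ) : ℂ) := by
    intro u
    by_cases hu : u ∈ Set.Icc k 1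
    · have hu0 : 0 < u := lt_of_lt_of_le hk0 hu.1
      have hpt : (fun t => φ (t,u)) = (Set.Ioo (-u) u).indicator
          (fun t => ((Real.exp (-u*a):ℝ):ℂ) * Complex.exp (Complex.I * ((b*t:ℝ):ℂ))) := by
        funext t
        by_cases h : t ∈ Set.Ioo (-u) u
        · have hzS : (t,u) ∈ S := ⟨h.1, h.2, hu.1, hu.2⟩
          rw [Set.indicator_of_mem h, hφdef, Set.indicator_of_mem hzS]
        · have hzS : (t,u) ∉ S := fun hzS => h ⟨hzS.1, hzS.2.1⟩
          rw [Set.indicator_of_notMem h, hφdef, Set.indicator_of_notMem hzS]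
      rw [hpt, MeasureTheory.integral_indicator measurableSet_Ioo, MeasureTheory.integral_const_mul,
        stmt14_L2 b u hb.ne' hu0, Set.indicator_of_mem hu]
      push_cast
      ring
    · have hpt : ∀ t : ℝ, φ (t,u) = 0 := by
        intro t
        rw [hφdef]
        apply Set.indicator_of_notMem
        intro hzS
        exact hu ⟨hzS.2.2.1, hzS.2.2.2⟩
      rw [Set.indicator_of_notMem hu]
      simp only [hpt, MeasureTheory.integral_zero, Complex.ofReal_zero]
  have hswap : ∫ t : ℝ, ∫ u : ℝ, φ (t, u) = ∫ u : ℝ, ∫ t : ℝ, φ (t, u) :=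
    MeasureTheory.integral_integral_swap hφi
  have hfinal_real : (∫ u : ℝ, (Set.Icc k 1).indicator
        (fun u => Real.exp (-u*a) * (2*Real.sin (b*u)/b)) u)
      = (2/b) * ((Real.exp (-a) * (-a*Real.sin b - b*Real.cos b)
          - Real.exp (-a*k) * (-a*Real.sin (b*k) - b*Real.cos (b*k))) / (a^2+b^2)) := by
    rw [MeasureTheory.integral_indicator measurableSet_Icc, MeasureTheory.integral_Icc_eq_integral_Ioc,
      ← intervalIntegral.integral_of_le hk1.le, ← stmt14_L1 a b k (by positivity),
      ← intervalIntegral.integral_const_mul]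
    apply intervalIntegral.integral_congr
    intro u _
    simp only
    ring_nf
  -- assemble
  rw [hstep1, hstep2]
  rw [MeasureTheory.integral_congr_ae (Filter.Eventually.of_forall hinner)]
  have h6 : (∫ t : ℝ, Complex.exp (Complex.I * ((b*t:ℝ):ℂ)) *
        ((2*π/a * ∫ u in Set.Ioi |t|, r u : ℝ):ℂ))
      = ((2*π/a : ℝ):ℂ) * ∫ t : ℝ, Complex.exp (Complex.I * ((b*t:ℝ):ℂ)) *
        ((∫ u in Set.Ioi |t|, r u : ℝ):ℂ) := by
    rw [← MeasureTheory.integral_const_mul]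
    congr 1
    funext t
    push_cast
    ring
  rw [h6]
  rw [MeasureTheory.integral_congr_ae (Filter.Eventually.of_forall hP1), hswap,
    MeasureTheory.integral_congr_ae (Filter.Eventually.of_forall hP2)]
  have h7 : (∫ u : ℝ, (((Set.Icc k 1).indicator
        (fun u => Real.exp (-u*a) * (2*Real.sin (b*u)/b)) u : ℝ) : ℂ))
      = ((∫ u : ℝ, (Set.Icc k 1).indicator
        (fun u => Real.exp (-u*a) * (2*Real.sin (b*u)/b)) u : ℝ) : ℂ) :=
    _root_.integral_ofReal
  rw [h7, hfinal_real]
  rw [← Complex.ofReal_mul, ← Complex.ofReal_mul]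
  congr 1
  rw [mul_comm b k, show (-a)*k = (-k)*a by ring]
  have hpi32 : (0:ℝ) < π ^ (3/2 : ℝ) := Real.rpow_pos_of_pos Real.pi_pos _
  have hco : Real.sqrt 2 * ((2*π) ^ (-(3:ℝ)/2)) = 1/2 * (π ^ (3/2:ℝ))⁻¹ := by
    have h1 : (2*π : ℝ) ^ (-(3:ℝ)/2) = 2 ^ (-(3:ℝ)/2) * π ^ (-(3:ℝ)/2) :=
      Real.mul_rpow (by norm_num) Real.pi_pos.le
    have h2 : Real.sqrt 2 = (2:ℝ) ^ (1/2 : ℝ) := by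
      rw [Real.sqrt_eq_rpow]
    have h3 : (2:ℝ) ^ (1/2 : ℝ) * 2 ^ (-(3:ℝ)/2) = 1/2 := by
      rw [← Real.rpow_add (by norm_num : (0:ℝ) < 2)]
      rw [show (1/2 : ℝ) + -(3:ℝ)/2 = -1 by norm_num, Real.rpow_neg_one]
      norm_num
    have h4 : π ^ (-(3:ℝ)/2) = (π ^ (3/2 : ℝ))⁻¹ := by
      rw [show (-(3:ℝ)/2) = -(3/2 : ℝ) by norm_num, Real.rpow_neg Real.pi_pos.le]
    rw [h1, h2, h4, ← mul_assoc, h3]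
  have hab2 : a^2 + b^2 ≠ 0 := by positivity
  have hs2 : Real.sqrt 2 ≠ 0 := by positivity
  have hC : (2*π : ℝ) ^ (-(3:ℝ)/2) = (π ^ (3/2:ℝ))⁻¹ / (2 * Real.sqrt 2) := by
    rw [eq_div_iff (mul_ne_zero two_ne_zero hs2)]
    linear_combination 2 * hco
  rw [hC]
  field_simp
  ring
end
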